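/- arXiv:1812.02099 — 3 statements merged into one kernel-verified Lean document; each statement's English description precedes it below -/
import Mathlib

section
/- If r : C → X(C) is a representation map for an ample concept class C, then r satisfies: (C1) for every c ∈ C, the cube of 2^X with support r(c) containing c is a cube of C; and (C2) for every cube B of C, there is a unique c ∈ B with r(c) ∩ supp(B) = ∅. -/
variable {X : Type} [Fintype X] [DecidableEq X]

/-- Hamming distance between two subsets of `X` (size of symmetric difference). -/
def hdist (c c' : Finset X) : ℕ := ((c \ c') ∪ (c' \ c)).card

/-- The restriction `C|Y = {c ∩ Y : c ∈ C}`. -/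
def restrictTo (C : Finset (Finset X)) (Y : Finset X) : Finset (Finset X) :=
  C.image (· ∩ Y)

/-- `Y` is shattered by `C`, i.e. `C|Y = 2^Y`. -/
def Shatters (C : Finset (Finset X)) (Y : Finset X) : Prop :=
  ∀ s ∈ Y.powerset, ∃ c ∈ C, c ∩ Y = s

instance (C : Finset (Finset X)) : DecidablePred (Shatters C) := fun _ => by
  unfold Shatters; infer_instance

/-- The family `X̄(C)` of all sets shattered by `C`. -/
def shatteredSets (C : Finset (Finset X)) : Finset (Finset X) :=
  Finset.univ.filter (Shatters C)

/-- The VC dimension of `C`: maximum size of a shattered set. -/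
def vcDim (C : Finset (Finset X)) : ℕ := (shatteredSets C).sup Finset.card

/-- `C` is ample: `|C| = |X̄(C)|`. -/
def IsAmple (C : Finset (Finset X)) : Prop := C.card = (shatteredSets C).card

/-- `C` is a maximum class of VC dimension `d`. -/
def IsMaximumClass (C : Finset (Finset X)) (d : ℕ) : Prop :=
  vcDim C = d ∧ C.card = ∑ i ∈ Finset.range (d + 1), (Fintype.card X).choose i

/-- `B` is a cube with support `Y`: `B = {t ∪ s : s ⊆ Y}` for some `t ⊆ X \ Y`. -/
def IsCubeS (B : Finset (Finset X)) (Y : Finset X) : Prop :=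
  ∃ t : Finset X, t ∩ Y = ∅ ∧ B = Y.powerset.image (fun s => t ∪ s)

/-- `B` is a cube. -/
def IsCube (B : Finset (Finset X)) : Prop := ∃ Y, IsCubeS B Y

/-- `B` is a cube of `C`: a cube contained in `C`. -/
def IsCubeOf (C B : Finset (Finset X)) : Prop := B ⊆ C ∧ IsCube B

/-- `B` is a maximal cube of `C` (maximal under inclusion among cubes of `C`). -/
def IsMaximalCubeOf (C B : Finset (Finset X)) : Prop :=
  IsCubeOf C B ∧ ∀ B', IsCubeOf C B' → B ⊆ B' → B = B'

/-- `c` is a corner of `C`: a concept of `C` belonging to a unique maximal cube of `C`. -/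
def IsCornerOf (C : Finset (Finset X)) (c : Finset X) : Prop :=
  c ∈ C ∧ ∃! B, IsMaximalCubeOf C B ∧ c ∈ B

/-- The one-inclusion graph `G(C)`. -/
def oneInclusionGraph (C : Finset (Finset X)) : SimpleGraph {c : Finset X // c ∈ C} where
  Adj c c' := hdist c.1 c'.1 = 1
  symm := by
    constructor
    intro a b h
    simpa [hdist, Finset.union_comm] using h
  loopless := by
    constructor
    intro a h
    simp [hdist] at h

/-- `C` is isometric: `G(C)` is connected and graph distances equal Hamming distances. -/
def IsIsometric (C : Finset (Finset X)) : Prop :=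
  (oneInclusionGraph C).Connected ∧
  ∀ c c' : {c : Finset X // c ∈ C}, (oneInclusionGraph C).dist c c' = hdist c.1 c'.1

/-- `C` is weakly isometric: `G(C)` is connected and graph distances equal Hamming
distances for pairs at Hamming distance at most 2. -/
def IsWeaklyIsometric (C : Finset (Finset X)) : Prop :=
  (oneInclusionGraph C).Connected ∧
  ∀ c c' : {c : Finset X // c ∈ C}, hdist c.1 c'.1 ≤ 2 →
    (oneInclusionGraph C).dist c c' = hdist c.1 c'.1

/-- A list of concepts is a corner peeling if it has no duplicates and each element is a
corner of the corresponding level set. -/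
def IsCornerPeeling (l : List (Finset X)) : Prop :=
  l.Nodup ∧ ∀ i (h : i < l.length), IsCornerOf ((l.take (i + 1)).toFinset) (l.get ⟨i, h⟩)

/-- `C` is dismantlable: it admits a corner peeling ordering of all its concepts. -/
def Dismantlable (C : Finset (Finset X)) : Prop :=
  ∃ l : List (Finset X), l.toFinset = C ∧ IsCornerPeeling l

/-- Non-clashing condition for a map `r`. -/
def NonClashing (C : Finset (Finset X)) (r : Finset X → Finset X) : Prop :=
  ∀ c ∈ C, ∀ c' ∈ C, c ≠ c' → c ∩ (r c ∪ r c') ≠ c' ∩ (r c ∪ r c')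

/-- `r` is a representation map for `C`: a non-clashing bijection from `C` onto `X̄(C)`. -/
def IsRepMap (C : Finset (Finset X)) (r : Finset X → Finset X) : Prop :=
  (∀ c ∈ C, r c ∈ shatteredSets C) ∧
  Set.InjOn r ↑C ∧
  (∀ Y ∈ shatteredSets C, ∃ c ∈ C, r c = Y) ∧
  NonClashing C r

/-- `C` admits an unlabeled sample compression scheme of size `k`. -/
def HasUSCS (C : Finset (Finset X)) (k : ℕ) : Prop :=
  ∃ (α : Finset X → Finset X → Finset X) (β : Finset X → Finset X),
    ∀ (Y : Finset X), ∀ c ∈ C,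
      α Y (c ∩ Y) ⊆ Y ∧ (α Y (c ∩ Y)).card ≤ k ∧
      β (α Y (c ∩ Y)) ∈ C ∧ β (α Y (c ∩ Y)) ∩ Y = c ∩ Y

/-- The cube of `2^X` with support `Y` containing `c`. -/
def cubeAt (c Y : Finset X) : Finset (Finset X) :=
  Y.powerset.image (fun s => (c \ Y) ∪ s)

/-- Condition (C1): for every `c ∈ C`, the cube with support `r c` containing `c`
is a cube of `C`. -/
def CondC1 (C : Finset (Finset X)) (r : Finset X → Finset X) : Prop :=
  ∀ c ∈ C, cubeAt c (r c) ⊆ C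

/-- Condition (C2): every cube of `C` has a unique concept `c` with `r c ∩ supp B = ∅`. -/
def CondC2 (C : Finset (Finset X)) (r : Finset X → Finset X) : Prop :=
  ∀ B Y, B ⊆ C → IsCubeS B Y → ∃! c, c ∈ B ∧ r c ∩ Y = ∅

/-- The facet of the cross-polytope corresponding to a subset `c ⊆ X`:
`+x ∈ σ_c` iff `x ∈ c` (where `+x = Sum.inl x` and `-x = Sum.inr x`). -/
def facet (c : Finset X) : Finset (X ⊕ X) :=
  c.image Sum.inl ∪ (Finset.univ \ c).image Sum.inr

/-- A list of facets of the cross-polytope is a partial shelling. -/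
def IsPartialShelling (L : List (Finset (X ⊕ X))) : Prop :=
  L.Nodup ∧ ∀ i j, i < j → j < L.length →
    ∃ k < j, ((L.getD k ∅) ∩ (L.getD j ∅)).card = Fintype.card X - 1 ∧
      (L.getD i ∅) ∩ (L.getD j ∅) ⊆ (L.getD k ∅) ∩ (L.getD j ∅)

/-- `Q` is an incomplete cube for `(C, D)` with support `σ`: a cube of `C` whose
support `σ` is a missed simplex (shattered by `C` but not by `D`). -/
def IsIncompleteCube (C D Q : Finset (Finset X)) (σ : Finset X) : Prop :=
  Q ⊆ C ∧ IsCubeS Q σ ∧ Shatters C σ ∧ ¬ Shatters D σ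

/-- `c` is the source of the incomplete cube `Q` with support `σ`:
`c ∈ Q` and `c ∩ σ ∉ D|σ`. -/
def IsSource (D Q : Finset (Finset X)) (σ : Finset X) (c : Finset X) : Prop :=
  c ∈ Q ∧ c ∩ σ ∉ restrictTo D σ

/-- The restriction `C_x = C|(X \ {x})`, with concepts viewed as subsets of `X`
avoiding `x`. -/
def restrictX (C : Finset (Finset X)) (x : X) : Finset (Finset X) :=
  C.image (·.erase x)

/-- The reduction `C^x = {c ⊆ X \ {x} : c ∈ C and c ∪ {x} ∈ C}`. -/
def reduction (C : Finset (Finset X)) (x : X) : Finset (Finset X) :=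
  C.filter (fun c => x ∉ c ∧ insert x c ∈ C)

/-- The interval `B(c,c') = {t : d(c,t) + d(t,c') = d(c,c')}`. -/
def interval (c c' : Finset X) : Finset (Finset X) :=
  Finset.univ.filter (fun t => hdist c t + hdist t c' = hdist c c')

/-- `C'` is convex in `C`. -/
def IsConvexIn (C C' : Finset (Finset X)) : Prop :=
  ∀ c ∈ C', ∀ c'' ∈ C', interval c c'' ∩ C ⊆ C'

/-- `C'` is locally convex in `C`. -/
def IsLocallyConvexIn (C C' : Finset (Finset X)) : Prop :=
  ∀ c ∈ C', ∀ c'' ∈ C', hdist c c'' = 2 → interval c c'' ∩ C ⊆ C'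

/-- `C` is a conditional antimatroid: contains `∅`, closed under intersection, and
every concept is generated by its extremal points. -/
def IsCondAntimatroid (C : Finset (Finset X)) : Prop :=
  ∅ ∈ C ∧ (∀ c ∈ C, ∀ c' ∈ C, c ∩ c' ∈ C) ∧
  ∀ c ∈ C, ∀ c' ∈ C, (c.filter (fun x => c.erase x ∈ C)) ⊆ c' → c ⊆ c'

set_option maxHeartbeats 1000000
open Finset hiding Shatters

set_option linter.unusedSectionVars false

lemma aux_mem_shattered {C : Finset (Finset X)} {S : Finset X} :
    S ∈ shatteredSets C ↔ Shatters C S := by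
  simp [shatteredSets]

lemma aux_card_decomp (C : Finset (Finset X)) (x : X) :
    (restrictX C x).card + (reduction C x).card = C.card := by
  classical
  set C0 := C.filter (fun c => x ∉ c) with hC0
  set C1 := C.filter (fun c => x ∈ c) with hC1
  have himg : restrictX C x = C0 ∪ C1.image (fun c => c.erase x) := by
    ext c'
    simp only [restrictX, mem_image, mem_union, hC0, hC1, mem_filter]
    constructor
    · rintro ⟨c, hc, rfl⟩
      by_cases hx : x ∈ c
      · exact Or.inr ⟨c, ⟨hc, hx⟩, rfl⟩
      · rw [Finset.erase_eq_of_notMem hx]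
        exact Or.inl ⟨hc, hx⟩
    · rintro (⟨hc, hx⟩ | ⟨c, ⟨hc, _⟩, rfl⟩)
      · exact ⟨c', hc, Finset.erase_eq_of_notMem hx⟩
      · exact ⟨c, hc, rfl⟩
  have hinter : C0 ∩ C1.image (fun c => c.erase x) = reduction C x := by
    ext c'
    simp only [reduction, mem_inter, mem_filter, mem_image, hC0, hC1]
    constructor
    · rintro ⟨⟨hc', hx⟩, c, ⟨hc, hxc⟩, rfl⟩
      exact ⟨hc', hx, by rwa [Finset.insert_erase hxc]⟩
    · rintro ⟨hc', hx, hins⟩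
      exact ⟨⟨hc', hx⟩, insert x c', ⟨hins, Finset.mem_insert_self x c'⟩,
        Finset.erase_insert hx⟩
  have hinj : (C1.image (fun c => c.erase x)).card = C1.card := by
    apply Finset.card_image_of_injOn
    intro a ha b hb h
    simp only [hC1, coe_filter, Set.mem_setOf_eq] at ha hb
    have := congrArg (insert x) h
    rwa [Finset.insert_erase ha.2, Finset.insert_erase hb.2] at this
  have hcup := Finset.card_union_add_card_inter C0 (C1.image (fun c => c.erase x))
  rw [← himg] at hcup
  rw [hinter] at hcup
  have hpart : C1.card + C0.card = C.card := by
    have := Finset.card_filter_add_card_filter_not (s := C) (p := fun c => x ∈ c)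
    simpa [hC0, hC1] using this
  omega

lemma aux_erase_inter {c S : Finset X} {x : X} (h : x ∉ S) : (c.erase x) ∩ S = c ∩ S := by
  ext a
  simp only [mem_inter, mem_erase]
  constructor
  · rintro ⟨⟨_, h1⟩, h2⟩; exact ⟨h1, h2⟩
  · rintro ⟨h1, h2⟩; exact ⟨⟨fun he => h (he ▸ h2), h1⟩, h2⟩

lemma aux_shatters_restrictX {C : Finset (Finset X)} {x : X} {S : Finset X} :
    Shatters (restrictX C x) S ↔ Shatters C S ∧ x ∉ S := by
  constructor
  · intro h
    have hxS : x ∉ S := by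
      obtain ⟨c', hc', hcS⟩ := h S (mem_powerset_self S)
      simp only [restrictX, mem_image] at hc'
      obtain ⟨c, _, rfl⟩ := hc'
      intro hx
      have hsub : S ⊆ c.erase x := Finset.inter_eq_right.mp hcS
      exact Finset.notMem_erase x c (hsub hx)
    refine ⟨fun s hs => ?_, hxS⟩
    obtain ⟨c', hc', hcs⟩ := h s hs
    simp only [restrictX, mem_image] at hc'
    obtain ⟨c, hc, rfl⟩ := hc'
    exact ⟨c, hc, by rwa [aux_erase_inter hxS] at hcs⟩
  · rintro ⟨h, hxS⟩ s hs
    obtain ⟨c, hc, hcs⟩ := h s hs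
    exact ⟨c.erase x, mem_image_of_mem _ hc, by rwa [aux_erase_inter hxS]⟩

lemma aux_shattered_restrictX (C : Finset (Finset X)) (x : X) :
    shatteredSets (restrictX C x) = (shatteredSets C).filter (fun S => x ∉ S) := by
  ext S
  simp only [aux_mem_shattered, mem_filter, aux_shatters_restrictX]

lemma aux_shatters_reduction_not_mem {C : Finset (Finset X)} {x : X} {S : Finset X}
    (h : Shatters (reduction C x) S) : x ∉ S := by
  obtain ⟨c, hc, hcS⟩ := h S (mem_powerset_self S)
  simp only [reduction, mem_filter] at hc
  intro hx
  exact hc.2.1 (Finset.inter_eq_right.mp hcS hx)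

lemma aux_card_shattered_reduction (C : Finset (Finset X)) (x : X) :
    (shatteredSets (reduction C x)).card ≤ ((shatteredSets C).filter (fun S => x ∈ S)).card := by
  apply Finset.card_le_card_of_injOn (fun S => insert x S)
  · intro S hS
    rw [Finset.mem_coe, aux_mem_shattered] at hS
    have hxS : x ∉ S := aux_shatters_reduction_not_mem hS
    simp only [Finset.mem_coe, mem_filter, aux_mem_shattered]
    refine ⟨fun s hs => ?_, Finset.mem_insert_self x S⟩
    rw [mem_powerset] at hs
    have hs' : s.erase x ⊆ S := by
      intro a ha
      rw [mem_erase] at ha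
      rcases Finset.mem_insert.mp (hs ha.2) with h | h
      · exact absurd h ha.1
      · exact h
    obtain ⟨c, hc, hcs⟩ := hS (s.erase x) (mem_powerset.mpr hs')
    simp only [reduction, mem_filter] at hc
    obtain ⟨hcC, hxc, hic⟩ := hc
    by_cases hxs : x ∈ s
    · refine ⟨insert x c, hic, ?_⟩
      rw [Finset.insert_inter_of_mem (Finset.mem_insert_self x S),
        Finset.inter_insert_of_notMem hxc, hcs, Finset.insert_erase hxs]
    · refine ⟨c, hcC, ?_⟩
      rw [Finset.inter_insert_of_notMem hxc, hcs, Finset.erase_eq_of_notMem hxs]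
  · intro S1 h1 S2 h2 h
    rw [Finset.mem_coe, aux_mem_shattered] at h1 h2
    have k1 := aux_shatters_reduction_not_mem h1
    have k2 := aux_shatters_reduction_not_mem h2
    have := congrArg (·.erase x) h
    simpa [Finset.erase_insert k1, Finset.erase_insert k2] using this

lemma aux_ssp (A : Finset X) :
    ∀ C : Finset (Finset X), (∀ c ∈ C, c ⊆ A) → C.card ≤ (shatteredSets C).card := by
  induction A using Finset.induction_on with
  | empty =>
    intro C hC
    rcases C.eq_empty_or_nonempty with rfl | hne
    · simp
    · have h1 : C.card ≤ 1 := by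
        have hsub : C ⊆ {∅} := by
          intro c hc
          rw [Finset.mem_singleton]
          exact Finset.subset_empty.mp (hC c hc)
        simpa using Finset.card_le_card hsub
      have h2 : 1 ≤ (shatteredSets C).card := by
        apply Finset.card_pos.mpr
        refine ⟨∅, ?_⟩
        rw [aux_mem_shattered]
        intro s hs
        obtain ⟨c, hc⟩ := hne
        rw [mem_powerset, Finset.subset_empty] at hs
        exact ⟨c, hc, by simp [hs]⟩
      omega
  | @insert a A' ha IH =>
    intro C hC
    have h1 : (restrictX C a).card ≤ (shatteredSets (restrictX C a)).card := by
      apply IH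
      intro c hc
      simp only [restrictX, mem_image] at hc
      obtain ⟨c', hc', rfl⟩ := hc
      intro b hb
      rw [mem_erase] at hb
      rcases Finset.mem_insert.mp (hC c' hc' hb.2) with h | h
      · exact absurd h hb.1
      · exact h
    have h2 : (reduction C a).card ≤ (shatteredSets (reduction C a)).card := by
      apply IH
      intro c hc
      simp only [reduction, mem_filter] at hc
      intro b hb
      rcases Finset.mem_insert.mp (hC c hc.1 hb) with h | h
      · exact absurd (h ▸ hb) hc.2.1
      · exact h
    have h3 := congrArg Finset.card (aux_shattered_restrictX C a)
    have h4 := aux_card_shattered_reduction C a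
    have h5 := Finset.card_filter_add_card_filter_not
      (s := shatteredSets C) (p := fun S => a ∈ S)
    have h6 := aux_card_decomp C a
    omega

lemma aux_isAmple_restrictX {C : Finset (Finset X)} (hC : IsAmple C) (x : X) :
    IsAmple (restrictX C x) := by
  have h1 := aux_ssp univ (restrictX C x) (fun c _ => Finset.subset_univ c)
  have h2 := aux_ssp univ (reduction C x) (fun c _ => Finset.subset_univ c)
  have h3 := congrArg Finset.card (aux_shattered_restrictX C x)
  have h4 := aux_card_shattered_reduction C x
  have h5 := Finset.card_filter_add_card_filter_not
    (s := shatteredSets C) (p := fun S => x ∈ S)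
  have h6 := aux_card_decomp C x
  unfold IsAmple at hC ⊢
  omega

lemma aux_restrictTo_univ (C : Finset (Finset X)) : restrictTo C univ = C := by
  unfold restrictTo
  simp [Finset.inter_univ]

lemma aux_restrictX_restrictTo (C : Finset (Finset X)) {Z : Finset X} {x : X} (hx : x ∉ Z) :
    restrictX (restrictTo C (insert x Z)) x = restrictTo C Z := by
  unfold restrictX restrictTo
  rw [Finset.image_image]
  apply Finset.image_congr
  intro c _
  ext a
  simp only [Function.comp_apply, mem_erase, mem_inter, mem_insert]
  constructor
  · rintro ⟨hne, hc, (rfl | hZ)⟩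
    · exact absurd rfl hne
    · exact ⟨hc, hZ⟩
  · rintro ⟨hc, hZ⟩
    exact ⟨fun h => hx (h ▸ hZ), hc, Or.inr hZ⟩

lemma aux_isAmple_restrictTo {C : Finset (Finset X)} (hC : IsAmple C) (Z : Finset X) :
    IsAmple (restrictTo C Z) := by
  generalize hn : (univ \ Z).card = n
  induction n generalizing Z with
  | zero =>
    have hZu : Z = univ := by
      have h0 : univ \ Z = ∅ := Finset.card_eq_zero.mp hn
      have := Finset.sdiff_eq_empty_iff_subset.mp h0
      exact Finset.univ_subset_iff.mp this
    rw [hZu, aux_restrictTo_univ]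
    exact hC
  | succ n IH =>
    have hne : (univ \ Z).Nonempty := by
      rw [← Finset.card_pos, hn]; omega
    obtain ⟨x, hx⟩ := hne
    have hxZ : x ∉ Z := (Finset.mem_sdiff.mp hx).2
    have hcard : (univ \ insert x Z).card = n := by
      have : univ \ insert x Z = (univ \ Z).erase x := by
        ext a
        simp only [mem_sdiff, mem_univ, true_and, mem_insert, mem_erase, not_or]
      rw [this, Finset.card_erase_of_mem hx, hn]
      omega
    have h1 := IH (insert x Z) hcard
    rw [← aux_restrictX_restrictTo C hxZ]
    exact aux_isAmple_restrictX h1 x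

lemma aux_inter_inter_of_subset (u : Finset X) {V Z : Finset X} (h : V ⊆ Z) :
    (u ∩ Z) ∩ V = u ∩ V := by
  rw [Finset.inter_assoc, Finset.inter_eq_right.mpr h]

lemma aux_shatters_restrictTo {C : Finset (Finset X)} {Z S : Finset X} :
    Shatters (restrictTo C Z) S ↔ Shatters C S ∧ S ⊆ Z := by
  constructor
  · intro h
    have hSZ : S ⊆ Z := by
      obtain ⟨c', hc', hcS⟩ := h S (mem_powerset_self S)
      simp only [restrictTo, mem_image] at hc'
      obtain ⟨c, _, rfl⟩ := hc'
      intro a haS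
      have : a ∈ c ∩ Z := Finset.inter_eq_right.mp hcS haS
      exact (Finset.mem_inter.mp this).2
    refine ⟨fun s hs => ?_, hSZ⟩
    obtain ⟨c', hc', hcs⟩ := h s hs
    simp only [restrictTo, mem_image] at hc'
    obtain ⟨c, hc, rfl⟩ := hc'
    exact ⟨c, hc, by rwa [aux_inter_inter_of_subset c hSZ] at hcs⟩
  · rintro ⟨h, hSZ⟩ s hs
    obtain ⟨c, hc, hcs⟩ := h s hs
    exact ⟨c ∩ Z, mem_image_of_mem _ hc, by rw [aux_inter_inter_of_subset c hSZ, hcs]⟩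


lemma aux_disj_iff {S Y : Finset X} : S ∩ Y = ∅ ↔ S ⊆ univ \ Y := by
  constructor
  · intro h a ha
    rw [Finset.mem_sdiff]
    refine ⟨Finset.mem_univ a, fun haY => ?_⟩
    have : a ∈ S ∩ Y := Finset.mem_inter.mpr ⟨ha, haY⟩
    rw [h] at this
    exact absurd this (Finset.notMem_empty a)
  · intro h
    rw [Finset.eq_empty_iff_forall_notMem]
    intro a ha
    rw [Finset.mem_inter] at ha
    exact (Finset.mem_sdiff.mp (h ha.1)).2 ha.2

lemma aux_oracle {C : Finset (Finset X)} (hC : IsAmple C) {r : Finset X → Finset X}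
    (hr : IsRepMap C r) (Y : Finset X) {c : Finset X} (hc : c ∈ C) :
    ∃! c', c' ∈ C ∧ r c' ∩ Y = ∅ ∧ c' ∩ (univ \ Y) = c ∩ (univ \ Y) := by
  classical
  obtain ⟨hmem, hinj, hsurj, hnc⟩ := hr
  set Z := (univ : Finset X) \ Y with hZ
  set T := C.filter (fun c' => r c' ∩ Y = ∅) with hT
  have hTsub : T ⊆ C := Finset.filter_subset _ _
  have hTinj : Set.InjOn (· ∩ Z) ↑T := by
    intro c1 h1 c2 h2 h12
    rw [Finset.mem_coe, hT, Finset.mem_filter] at h1 h2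
    by_contra hne
    apply hnc c1 h1.1 c2 h2.1 hne
    have hU : r c1 ∪ r c2 ⊆ Z :=
      Finset.union_subset (aux_disj_iff.mp h1.2) (aux_disj_iff.mp h2.2)
    calc c1 ∩ (r c1 ∪ r c2) = (c1 ∩ Z) ∩ (r c1 ∪ r c2) := (aux_inter_inter_of_subset c1 hU).symm
      _ = (c2 ∩ Z) ∩ (r c1 ∪ r c2) := by rw [show c1 ∩ Z = c2 ∩ Z from h12]
      _ = c2 ∩ (r c1 ∪ r c2) := aux_inter_inter_of_subset c2 hU
  have hcard1 : T.card = ((shatteredSets C).filter (fun S => S ∩ Y = ∅)).card := by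
    rw [← Finset.card_image_of_injOn (f := r) (hinj.mono (Finset.coe_subset.mpr hTsub))]
    congr 1
    ext S
    simp only [Finset.mem_image, Finset.mem_filter, hT]
    constructor
    · rintro ⟨c1, ⟨hc1, hre⟩, rfl⟩
      exact ⟨aux_mem_shattered.mp (hmem c1 hc1) |> fun h => aux_mem_shattered.mpr h, hre⟩
    · rintro ⟨hS, hSY⟩
      obtain ⟨c1, hc1, rfl⟩ := hsurj S hS
      exact ⟨c1, ⟨hc1, hSY⟩, rfl⟩
  have hcard2 : (shatteredSets C).filter (fun S => S ∩ Y = ∅) = shatteredSets (restrictTo C Z) := by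
    ext S
    simp only [Finset.mem_filter, aux_mem_shattered, aux_shatters_restrictTo, aux_disj_iff, hZ]
  have hample := aux_isAmple_restrictTo hC Z
  have hcardT : T.card = (restrictTo C Z).card := by
    rw [hcard1, hcard2]
    exact hample.symm
  have himg : T.image (· ∩ Z) = restrictTo C Z := by
    apply Finset.eq_of_subset_of_card_le
    · intro u hu
      rw [Finset.mem_image] at hu
      obtain ⟨c1, hc1, rfl⟩ := hu
      exact Finset.mem_image_of_mem _ (hTsub hc1)
    · rw [Finset.card_image_of_injOn hTinj, ← hcardT]
  have hcZ : c ∩ Z ∈ T.image (· ∩ Z) := by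
    rw [himg]
    exact Finset.mem_image_of_mem _ hc
  rw [Finset.mem_image] at hcZ
  obtain ⟨c1, hc1T, hc1Z⟩ := hcZ
  have hc1T' := Finset.mem_filter.mp hc1T
  refine ⟨c1, ⟨hc1T'.1, hc1T'.2, hc1Z⟩, ?_⟩
  rintro c2 ⟨h1, h2, h3⟩
  exact hTinj (Finset.mem_coe.mpr (Finset.mem_filter.mpr ⟨h1, h2⟩))
    (Finset.mem_coe.mpr hc1T) (h3.trans hc1Z.symm)


lemma aux_inter_compl (u Y : Finset X) : u ∩ (univ \ Y) = u \ Y := by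
  ext a
  simp only [mem_inter, mem_sdiff, mem_univ, true_and]

lemma aux_condC2 {C : Finset (Finset X)} (hC : IsAmple C) {r : Finset X → Finset X}
    (hr : IsRepMap C r) : CondC2 C r := by
  intro B Y hBC hcube
  obtain ⟨t, htY, rfl⟩ := hcube
  have htB : t ∈ Y.powerset.image (fun s => t ∪ s) :=
    Finset.mem_image.mpr ⟨∅, Finset.mem_powerset.mpr (Finset.empty_subset Y), Finset.union_empty t⟩
  have htC : t ∈ C := hBC htB
  have htd : t \ Y = t := by
    rw [Finset.sdiff_eq_self_iff_disjoint, Finset.disjoint_iff_inter_eq_empty]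
    exact htY
  obtain ⟨c', hc'p, huniq⟩ := aux_oracle hC hr Y htC
  have hchar : ∀ u, (u ∈ Y.powerset.image (fun s => t ∪ s) ∧ r u ∩ Y = ∅) ↔
      (u ∈ C ∧ r u ∩ Y = ∅ ∧ u ∩ (univ \ Y) = t ∩ (univ \ Y)) := by
    intro u
    rw [aux_inter_compl u Y, aux_inter_compl t Y, htd]
    constructor
    · rintro ⟨huB, hru⟩
      refine ⟨hBC huB, hru, ?_⟩
      rw [Finset.mem_image] at huB
      obtain ⟨s, hs, rfl⟩ := huB
      rw [Finset.mem_powerset] at hs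
      rw [Finset.union_sdiff_distrib, htd,
        Finset.sdiff_eq_empty_iff_subset.mpr hs, Finset.union_empty]
    · rintro ⟨huC, hru, hud⟩
      refine ⟨?_, hru⟩
      rw [Finset.mem_image]
      refine ⟨u ∩ Y, Finset.mem_powerset.mpr (Finset.inter_subset_right), ?_⟩
      rw [← hud, Finset.sdiff_union_inter]
  refine ⟨c', (hchar c').mpr hc'p, fun u hu => huniq u ((hchar u).mp hu)⟩

open scoped symmDiff in
lemma aux_sdiff_eq_iff {u v W : Finset X} : u \ W = v \ W ↔ u ∆ v ⊆ W := by
  constructor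
  · intro h a ha
    rw [Finset.mem_symmDiff] at ha
    by_contra haW
    have h1 := Finset.ext_iff.mp h a
    simp only [Finset.mem_sdiff] at h1
    tauto
  · intro h
    ext a
    have := @h a
    rw [Finset.mem_symmDiff] at this
    simp only [Finset.mem_sdiff]
    tauto

open scoped symmDiff in
lemma aux_symmdiff_cube {c Y s : Finset X} (hs : s ⊆ Y) :
    c ∆ ((c ∩ Y) ∆ s) = (c \ Y) ∪ s := by
  ext a
  have ha := @hs a
  simp only [Finset.mem_symmDiff, Finset.mem_inter, Finset.mem_sdiff, Finset.mem_union]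
  tauto

open scoped symmDiff in
lemma aux_condC1 {C : Finset (Finset X)} (hC : IsAmple C) {r : Finset X → Finset X}
    (hr : IsRepMap C r) : CondC1 C r := by
  classical
  intro c hc d hd
  by_contra hdC
  rw [cubeAt, Finset.mem_image] at hd
  obtain ⟨s, hs, rfl⟩ := hd
  rw [Finset.mem_powerset] at hs
  have hne : ((r c).powerset.filter (fun D => c ∆ D ∉ C)).Nonempty := by
    refine ⟨(c ∩ r c) ∆ s, Finset.mem_filter.mpr ⟨Finset.mem_powerset.mpr ?_, ?_⟩⟩
    · intro a ha
      rw [Finset.mem_symmDiff] at ha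
      rcases ha with ⟨h1, _⟩ | ⟨h1, _⟩
      · exact (Finset.mem_inter.mp h1).2
      · exact hs h1
    · rwa [aux_symmdiff_cube hs]
  obtain ⟨D, hDmem, hDmin⟩ := Finset.exists_min_image _ Finset.card hne
  rw [Finset.mem_filter, Finset.mem_powerset] at hDmem
  obtain ⟨hDY, hHole⟩ := hDmem
  have hcempty : c ∆ (∅ : Finset X) = c := by
    ext a; rw [Finset.mem_symmDiff]; simp
  have hDne : D ≠ ∅ := by
    rintro rfl
    rw [hcempty] at hHole
    exact hHole hc
  have hFill : ∀ D' ⊆ D, D' ≠ D → c ∆ D' ∈ C := by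
    intro D' hsub hneq
    by_contra hno
    have hm : D' ∈ (r c).powerset.filter (fun E => c ∆ E ∉ C) :=
      Finset.mem_filter.mpr ⟨Finset.mem_powerset.mpr (hsub.trans hDY), hno⟩
    exact hneq (Finset.eq_of_subset_of_card_le hsub (hDmin D' hm))
  set P := D.powerset.erase D with hP
  have hPmem : ∀ D', D' ∈ P ↔ D' ⊆ D ∧ D' ≠ D := by
    intro D'
    rw [hP, Finset.mem_erase, Finset.mem_powerset, and_comm]
  have hcancel : ∀ v : Finset X, c ∆ (c ∆ v) = v := fun v => symmDiff_symmDiff_cancel_left c v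
  -- the counting lemma
  have hcount : ∀ Y', Y' ⊆ D → Y' ≠ ∅ →
      ((P.filter (fun D' => r (c ∆ D') ∩ Y' = ∅)).card = 2 ^ (D.card - Y'.card)) := by
    intro Y' hY'D hY'ne
    have hmapsto : ∀ D' ∈ P.filter (fun D' => r (c ∆ D') ∩ Y' = ∅),
        D' \ Y' ∈ (D \ Y').powerset := by
      intro D' hD'
      rw [Finset.mem_powerset]
      exact Finset.sdiff_subset_sdiff
        ((hPmem D').mp (Finset.mem_filter.mp hD').1).1 (Finset.Subset.refl Y')
    have hfib : ∀ E ∈ (D \ Y').powerset,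
        ((P.filter (fun D' => r (c ∆ D') ∩ Y' = ∅)).filter (fun D' => D' \ Y' = E)).card = 1 := by
      intro E hE
      rw [Finset.mem_powerset] at hE
      obtain ⟨y, hy⟩ := Finset.nonempty_iff_ne_empty.mpr hY'ne
      have hED : E ⊆ D := hE.trans Finset.sdiff_subset
      have hEY' : ∀ a ∈ E, a ∉ Y' := fun a ha => (Finset.mem_sdiff.mp (hE ha)).2
      have hEne : E ≠ D := by
        rintro rfl
        exact hEY' y (hY'D hy) hy
      have hcE : c ∆ E ∈ C := hFill E hED hEne
      obtain ⟨u, ⟨huC, hruY, huZ⟩, huniq⟩ := aux_oracle hC hr Y' hcE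
      rw [aux_inter_compl, aux_inter_compl, aux_sdiff_eq_iff] at huZ
      have hv0E : (c ∆ u) \ Y' = E := by
        ext a
        have h1 := @huZ a
        have h3 := hEY' a
        simp only [Finset.mem_symmDiff] at h1
        simp only [Finset.mem_sdiff, Finset.mem_symmDiff]
        tauto
      have hv0P : c ∆ u ∈ P := by
        rw [hPmem]
        constructor
        · intro a ha
          by_cases haY : a ∈ Y'
          · exact hY'D haY
          · exact hED (hv0E ▸ Finset.mem_sdiff.mpr ⟨ha, haY⟩)
        · intro hEq
          apply hHole
          have huD : c ∆ D = u := by rw [← hEq]; exact hcancel u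
          rw [huD]; exact huC
      have hv0r : r (c ∆ (c ∆ u)) ∩ Y' = ∅ := by rw [hcancel]; exact hruY
      rw [Finset.card_eq_one]
      refine ⟨c ∆ u, Finset.eq_singleton_iff_unique_mem.mpr ⟨?_, ?_⟩⟩
      · rw [Finset.mem_filter, Finset.mem_filter]
        exact ⟨⟨hv0P, hv0r⟩, hv0E⟩
      · intro v hv
        rw [Finset.mem_filter, Finset.mem_filter] at hv
        obtain ⟨⟨hvP, hvr⟩, hvE⟩ := hv
        obtain ⟨hvD, hvne⟩ := (hPmem v).mp hvP
        have hcvC : c ∆ v ∈ C := hFill v hvD hvne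
        have hagree : (c ∆ v) ∩ (univ \ Y') = (c ∆ E) ∩ (univ \ Y') := by
          rw [aux_inter_compl, aux_inter_compl, aux_sdiff_eq_iff]
          intro a ha
          have h2 := Finset.ext_iff.mp hvE a
          have h3 := hEY' a
          simp only [Finset.mem_sdiff] at h2
          simp only [Finset.mem_symmDiff] at ha
          by_contra haY
          tauto
        have hvu := huniq (c ∆ v) ⟨hcvC, hvr, hagree⟩
        rw [← hvu]
        exact (hcancel v).symm
    rw [Finset.card_eq_sum_card_fiberwise hmapsto, Finset.sum_congr rfl hfib,
      Finset.sum_const, smul_eq_mul, mul_one, Finset.card_powerset, Finset.card_sdiff_of_subset hY'D]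
  -- inclusion-exclusion
  have hPcard : P.card = 2 ^ D.card - 1 := by
    rw [hP, Finset.card_erase_of_mem (Finset.mem_powerset_self D), Finset.card_powerset]
  have hkey : ∀ D' ∈ P, (∑ Y' ∈ D.powerset, (-1 : ℤ) ^ Y'.card *
      (if r (c ∆ D') ∩ Y' = ∅ then 1 else 0)) = (if D ⊆ r (c ∆ D') then 1 else 0) := by
    intro D' _
    have h1 : ∀ Y' ∈ D.powerset, (-1 : ℤ) ^ Y'.card * (if r (c ∆ D') ∩ Y' = ∅ then 1 else 0)
        = if Y' ∈ (D \ r (c ∆ D')).powerset then (-1 : ℤ) ^ Y'.card else 0 := by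
      intro Y' hY'
      rw [Finset.mem_powerset] at hY'
      by_cases hcase : r (c ∆ D') ∩ Y' = ∅
      · rw [if_pos hcase, mul_one, if_pos]
        rw [Finset.mem_powerset]
        intro a ha
        rw [Finset.mem_sdiff]
        refine ⟨hY' ha, fun hrr => ?_⟩
        have : a ∈ r (c ∆ D') ∩ Y' := Finset.mem_inter.mpr ⟨hrr, ha⟩
        rw [hcase] at this
        exact absurd this (Finset.notMem_empty a)
      · rw [if_neg hcase, mul_zero, if_neg]
        rw [Finset.mem_powerset]
        intro hsub
        apply hcase
        rw [Finset.eq_empty_iff_forall_notMem]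
        intro a ha
        rw [Finset.mem_inter] at ha
        exact (Finset.mem_sdiff.mp (hsub ha.2)).2 ha.1
    rw [Finset.sum_congr rfl h1, Finset.sum_ite_mem,
      Finset.inter_eq_right.mpr (Finset.powerset_mono.mpr Finset.sdiff_subset),
      Finset.sum_powerset_neg_one_pow_card]
    simp only [Finset.sdiff_eq_empty_iff_subset]
  have hswap : (∑ Y' ∈ D.powerset, (-1 : ℤ) ^ Y'.card *
      ((P.filter (fun D' => r (c ∆ D') ∩ Y' = ∅)).card : ℤ))
      = ∑ D' ∈ P, (if D ⊆ r (c ∆ D') then 1 else 0) := by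
    have h1 : ∀ Y' ∈ D.powerset, (-1 : ℤ) ^ Y'.card *
        ((P.filter (fun D' => r (c ∆ D') ∩ Y' = ∅)).card : ℤ)
        = ∑ D' ∈ P, (-1 : ℤ) ^ Y'.card * (if r (c ∆ D') ∩ Y' = ∅ then 1 else 0) := by
      intro Y' _
      rw [← Finset.sum_boole, Finset.mul_sum]
    rw [Finset.sum_congr rfl h1, Finset.sum_comm, Finset.sum_congr rfl hkey]
  have hemptyP : (∅ : Finset X) ∈ P := (hPmem ∅).mpr ⟨Finset.empty_subset D, fun h => hDne h.symm⟩
  have hge : (1 : ℤ) ≤ ∑ D' ∈ P, (if D ⊆ r (c ∆ D') then 1 else 0) := by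
    have hnn : ∀ i ∈ P, (0 : ℤ) ≤ if D ⊆ r (c ∆ i) then 1 else 0 := by
      intro i _
      split <;> norm_num
    have := Finset.single_le_sum hnn hemptyP
    rw [hcempty, if_pos hDY] at this
    exact this
  have hval : ∀ Y' ∈ D.powerset, (((P.filter (fun D' => r (c ∆ D') ∩ Y' = ∅)).card : ℤ))
      = 2 ^ (D.card - Y'.card) - (if Y' = ∅ then 1 else 0) := by
    intro Y' hY'
    rw [Finset.mem_powerset] at hY'
    by_cases h0 : Y' = ∅
    · subst h0
      have hall : P.filter (fun D' => r (c ∆ D') ∩ (∅ : Finset X) = ∅) = P :=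
        Finset.filter_true_of_mem (fun _ _ => Finset.inter_empty _)
      rw [hall, hPcard, if_pos rfl]
      have h1 : (1 : ℕ) ≤ 2 ^ D.card := Nat.one_le_two_pow
      rw [Nat.cast_sub h1]
      simp
    · rw [hcount Y' hY' h0, if_neg h0, sub_zero]
      push_cast
      ring
  have hA : ∑ Y' ∈ D.powerset, (-1 : ℤ) ^ Y'.card * 2 ^ (D.card - Y'.card) = 1 := by
    have hprod := Finset.prod_add (fun _ : X => (-1 : ℤ)) (fun _ : X => (2 : ℤ)) D
    simp only [Finset.prod_const] at hprod
    rw [Finset.sum_congr rfl (fun Y' hY' => by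
      rw [Finset.card_sdiff_of_subset (Finset.mem_powerset.mp hY')])] at hprod
    norm_num at hprod
    exact hprod.symm
  have hB : ∑ Y' ∈ D.powerset, (-1 : ℤ) ^ Y'.card * (if Y' = ∅ then 1 else 0) = 1 := by
    have h1 : ∀ Y' ∈ D.powerset, (-1 : ℤ) ^ Y'.card * (if Y' = ∅ then 1 else 0)
        = if Y' = ∅ then 1 else 0 := by
      intro Y' _
      by_cases h : Y' = ∅
      · subst h; simp
      · simp [h]
    rw [Finset.sum_congr rfl h1, Finset.sum_ite_eq' D.powerset (∅ : Finset X) (fun _ => (1 : ℤ))]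
    simp [Finset.empty_mem_powerset]
  have hLHS : (∑ Y' ∈ D.powerset, (-1 : ℤ) ^ Y'.card *
      ((P.filter (fun D' => r (c ∆ D') ∩ Y' = ∅)).card : ℤ)) = 0 := by
    rw [Finset.sum_congr rfl (fun Y' hY' => by rw [hval Y' hY'])]
    simp only [mul_sub]
    rw [Finset.sum_sub_distrib, hA, hB]
    ring
  rw [hswap] at hLHS
  rw [hLHS] at hge
  norm_num at hge

/-- Any representation map of an ample class satisfies conditions
(C1) and (C2). -/
theorem stmt_16 (C : Finset (Finset X)) (hC : IsAmple C) (r : Finset X → Finset X)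
    (hr : IsRepMap C r) : CondC1 C r ∧ CondC2 C r := by
  exact ⟨aux_condC1 hC hr, aux_condC2 hC hr⟩
end

section
/- An ample concept class C admits a corner peeling if and only if there exists a map r : C → 2^X satisfying conditions (C1) and (C2) whose induced orientation o_r of the one-inclusion graph G(C) is acyclic, where the x-edge cc' of G(C) is directed from c to c' if and only if x ∈ r(c). -/
variable {X : Type} [Fintype X] [DecidableEq X]

/-! ### Auxiliary development -/

set_option linter.unusedSectionVars false
set_option maxHeartbeats 1000000
set_option linter.unreachableTactic false
set_option linter.unusedTactic false

namespace Stmt18Aux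

/-- symmetric difference -/
def sd (a b : Finset X) : Finset X := (a \ b) ∪ (b \ a)

lemma mem_sd {a b : Finset X} {x : X} : x ∈ sd a b ↔ ((x ∈ a) ↔ x ∉ b) := by
  unfold sd; simp only [Finset.mem_union, Finset.mem_sdiff]; tauto

lemma sd_comm (a b : Finset X) : sd a b = sd b a := by
  ext x; simp only [mem_sd]; tauto

lemma sd_eq_empty_iff {a b : Finset X} : sd a b = ∅ ↔ a = b := by
  constructor
  · intro h; ext x
    have := Finset.ext_iff.1 h x
    simp only [mem_sd, Finset.notMem_empty, iff_false] at this
    tauto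
  · rintro rfl; ext x; simp only [mem_sd, Finset.notMem_empty, iff_false]; tauto

lemma hdist_eq {a b : Finset X} : hdist a b = (sd a b).card := rfl

lemma sd_sd_cancel (a s : Finset X) : sd a (sd a s) = s := by
  ext x; simp only [mem_sd]; tauto

lemma sd_singleton_ne (a : Finset X) (x : X) : sd a {x} ≠ a := by
  intro h
  have := Finset.ext_iff.1 h x
  simp only [mem_sd, Finset.mem_singleton] at this
  tauto

lemma erase_eq_erase_cases {a b : Finset X} {z : X} (h : a.erase z = b.erase z) :
    a = b ∨ a = sd b {z} := by
  by_cases hz : (z ∈ a) ↔ (z ∈ b)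
  · left; ext x
    by_cases hxz : x = z
    · subst hxz; exact hz
    · have := Finset.ext_iff.1 h x
      simp only [Finset.mem_erase, hxz, ne_eq, not_false_iff, true_and] at this
      exact this
  · right; ext x
    simp only [mem_sd, Finset.mem_singleton]
    by_cases hxz : x = z
    · subst hxz; tauto
    · have := Finset.ext_iff.1 h x
      simp only [Finset.mem_erase, hxz, ne_eq, not_false_iff, true_and] at this
      tauto

lemma erase_sd (a b : Finset X) (z : X) : sd (a.erase z) (b.erase z) = (sd a b).erase z := by
  ext x
  simp only [mem_sd, Finset.mem_erase, ne_eq]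
  by_cases hxz : x = z <;> simp [hxz] <;> tauto

lemma sd_erase_of_ne {a : Finset X} {y z : X} (h : y ≠ z) :
    sd (a.erase z) {y} = (sd a {y}).erase z := by
  ext x
  simp only [mem_sd, Finset.mem_erase, Finset.mem_singleton, ne_eq]
  by_cases hxz : x = z
  · subst hxz; simp [h]; try tauto
  · simp [hxz]; try tauto

lemma sd_sd_singleton {v : Finset X} {y z : X} (h : y ≠ z) :
    sd (sd v {y}) {z} = sd v {y, z} := by
  ext x
  simp only [mem_sd, Finset.mem_singleton, Finset.mem_insert]
  by_cases hxy : x = y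
  · subst hxy; simp [h]; try tauto
  · by_cases hxz : x = z <;> simp [hxy, hxz] <;> try tauto

/-! ### cubes -/

lemma mem_cubeAt {c Y d : Finset X} : d ∈ cubeAt c Y ↔ d \ Y = c \ Y := by
  unfold cubeAt
  simp only [Finset.mem_image, Finset.mem_powerset]
  constructor
  · rintro ⟨s, hs, rfl⟩
    ext x
    simp only [Finset.mem_sdiff, Finset.mem_union]
    have hsx : x ∈ s → x ∈ Y := fun h => hs h
    tauto
  · intro h
    refine ⟨d ∩ Y, Finset.inter_subset_right, ?_⟩
    ext x
    have hx : x ∈ d \ Y ↔ x ∈ c \ Y := by rw [h]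
    simp only [Finset.mem_sdiff] at hx
    simp only [Finset.mem_union, Finset.mem_sdiff, Finset.mem_inter]
    tauto

lemma self_mem_cubeAt (c Y : Finset X) : c ∈ cubeAt c Y := mem_cubeAt.2 rfl

lemma cubeAt_eq_of_mem {c Y d : Finset X} (h : d ∈ cubeAt c Y) : cubeAt d Y = cubeAt c Y := by
  have hd : d \ Y = c \ Y := mem_cubeAt.1 h
  ext e; simp only [mem_cubeAt, hd]

lemma cubeAt_mono {c S Y : Finset X} (h : S ⊆ Y) : cubeAt c S ⊆ cubeAt c Y := by
  intro d hd
  rw [mem_cubeAt] at hd ⊢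
  ext x
  by_cases hxY : x ∈ Y
  · simp [Finset.mem_sdiff, hxY]
  · have hxS : x ∉ S := fun hx => hxY (h hx)
    have := Finset.ext_iff.1 hd x
    simp only [Finset.mem_sdiff, hxS, not_false_iff, and_true] at this
    simp only [Finset.mem_sdiff, hxY, not_false_iff, and_true]
    exact this

lemma sd_mem_cubeAt {c Y d s : Finset X} (hd : d ∈ cubeAt c Y) (hs : s ⊆ Y) :
    sd d s ∈ cubeAt c Y := by
  rw [mem_cubeAt] at hd ⊢
  rw [← hd]
  ext x
  simp only [Finset.mem_sdiff, mem_sd]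
  have hsx : x ∈ s → x ∈ Y := fun h => hs h
  tauto

lemma sd_subset_of_mem_cubeAt {c Y d d' : Finset X} (hd : d ∈ cubeAt c Y)
    (hd' : d' ∈ cubeAt c Y) : sd d d' ⊆ Y := by
  intro x hx
  rw [mem_sd] at hx
  by_contra hxY
  rw [mem_cubeAt] at hd hd'
  have h1 := Finset.ext_iff.1 hd x
  have h2 := Finset.ext_iff.1 hd' x
  simp only [Finset.mem_sdiff, hxY, not_false_iff, and_true] at h1 h2
  tauto

lemma subset_of_cubeAt_subset {c S Y : Finset X} (h : cubeAt c S ⊆ cubeAt c Y) : S ⊆ Y := by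
  intro x hx
  have h1 : sd c {x} ∈ cubeAt c S := sd_mem_cubeAt (self_mem_cubeAt c S) (by simpa using hx)
  have h2 := sd_subset_of_mem_cubeAt (h h1) (h (self_mem_cubeAt c S))
  have : x ∈ sd (sd c {x}) c := by
    rw [sd_comm, sd_sd_cancel]; exact Finset.mem_singleton_self x
  exact h2 this

lemma isCubeS_cubeAt (c Y : Finset X) : IsCubeS (cubeAt c Y) Y := by
  refine ⟨c \ Y, ?_, rfl⟩
  ext x; simp [Finset.mem_inter, Finset.mem_sdiff]; try tauto

lemma isCubeS_eq_cubeAt {B : Finset (Finset X)} {Y c : Finset X} (h : IsCubeS B Y)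
    (hc : c ∈ B) : B = cubeAt c Y := by
  obtain ⟨t, ht, rfl⟩ := h
  have htY : t \ Y = t := by
    ext x
    simp only [Finset.mem_sdiff, and_iff_left_iff_imp]
    intro hxt hxY
    have : x ∈ t ∩ Y := Finset.mem_inter.2 ⟨hxt, hxY⟩
    rw [ht] at this; exact absurd this (Finset.notMem_empty x)
  have h1 : Y.powerset.image (fun s => t ∪ s) = cubeAt t Y := by
    unfold cubeAt; rw [htY]
  rw [h1] at hc ⊢
  exact (cubeAt_eq_of_mem hc).symm

lemma cubeAt_nonempty (c Y : Finset X) : (cubeAt c Y).Nonempty := ⟨c, self_mem_cubeAt c Y⟩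

lemma cubeAt_singleton_sub {c : Finset X} {y : X} {D : Finset (Finset X)}
    (hc : c ∈ D) (hcy : sd c {y} ∈ D) : cubeAt c {y} ⊆ D := by
  intro d hd
  rw [mem_cubeAt] at hd
  have : d.erase y = c.erase y := by
    rw [← Finset.sdiff_singleton_eq_erase, ← Finset.sdiff_singleton_eq_erase]; exact hd
  rcases erase_eq_erase_cases this with h1 | h1
  · rw [h1]; exact hc
  · rw [h1]; exact hcy


/-! ### support of a cube, maximal cubes -/

lemma cubeAt_sup (c Y : Finset X) : (cubeAt c Y).sup id = (c \ Y) ∪ Y := by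
  apply le_antisymm
  · apply Finset.sup_le
    intro d hd
    rw [mem_cubeAt] at hd
    intro x hx
    simp only [Finset.mem_union, Finset.mem_sdiff]
    by_cases hxY : x ∈ Y
    · right; exact hxY
    · left
      have := Finset.ext_iff.1 hd x
      simp only [Finset.mem_sdiff, hxY, not_false_iff, and_true] at this
      exact ⟨this.1 hx, hxY⟩
  · have hmem : (c \ Y) ∪ Y ∈ cubeAt c Y := by
      rw [mem_cubeAt]; ext x
      simp only [Finset.mem_sdiff, Finset.mem_union]; tauto
    exact Finset.le_sup (f := id) hmem

lemma cubeAt_inf (c Y : Finset X) : (cubeAt c Y).inf id = c \ Y := by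
  apply le_antisymm
  · have hmem : c \ Y ∈ cubeAt c Y := by
      rw [mem_cubeAt]; ext x
      simp only [Finset.mem_sdiff]; tauto
    exact Finset.inf_le hmem
  · apply Finset.le_inf
    intro d hd
    rw [mem_cubeAt] at hd
    intro x hx
    rw [← hd] at hx
    exact (Finset.mem_sdiff.1 hx).1

/-- canonical support of a cube -/
def suppB (B : Finset (Finset X)) : Finset X := (B.sup id) \ (B.inf id)

lemma suppB_cubeAt (c Y : Finset X) : suppB (cubeAt c Y) = Y := by
  unfold suppB
  rw [cubeAt_sup, cubeAt_inf]
  ext x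
  simp only [Finset.mem_sdiff, Finset.mem_union]
  tauto

lemma suppB_of_isCubeS {B : Finset (Finset X)} {Y : Finset X} (h : IsCubeS B Y) :
    suppB B = Y := by
  have hne : B.Nonempty := by
    obtain ⟨t, _, rfl⟩ := h
    exact ⟨t ∪ ∅, Finset.mem_image.2 ⟨∅, by simp⟩⟩
  obtain ⟨c, hc⟩ := hne
  rw [isCubeS_eq_cubeAt h hc, suppB_cubeAt]

lemma exists_maximal_cube {D Q : Finset (Finset X)} (hQ : IsCubeOf D Q) :
    ∃ B, IsMaximalCubeOf D B ∧ Q ⊆ B := by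
  classical
  have hne : (D.powerset.filter (fun B => IsCubeOf D B ∧ Q ⊆ B)).Nonempty := by
    exact ⟨Q, Finset.mem_filter.2 ⟨Finset.mem_powerset.2 hQ.1, hQ, Finset.Subset.refl Q⟩⟩
  obtain ⟨B, hB, hmax⟩ := Finset.exists_max_image _ Finset.card hne
  rw [Finset.mem_filter] at hB
  refine ⟨B, ⟨hB.2.1, ?_⟩, hB.2.2⟩
  intro B' hB' hBB'
  apply Finset.eq_of_subset_of_card_le hBB'
  exact hmax B' (Finset.mem_filter.2 ⟨Finset.mem_powerset.2 hB'.1, hB',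
    hB.2.2.trans hBB'⟩)

/-- every cube of `D` containing a corner `c` is contained in the unique maximal cube. -/
lemma cube_subset_of_corner {D Q B : Finset (Finset X)} {c : Finset X}
    (hB : IsMaximalCubeOf D B ∧ c ∈ B)
    (huniq : ∀ B', (IsMaximalCubeOf D B' ∧ c ∈ B') → B' = B)
    (hQ : IsCubeOf D Q) (hcQ : c ∈ Q) : Q ⊆ B := by
  obtain ⟨B', hB', hQB'⟩ := exists_maximal_cube hQ
  have : B' = B := huniq B' ⟨hB', hQB' hcQ⟩
  rw [← this]; exact hQB'

/-! ### shattering basics -/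

lemma mem_shatteredSets {D : Finset (Finset X)} {Y : Finset X} :
    Y ∈ shatteredSets D ↔ Shatters D Y := by
  simp [shatteredSets]

lemma shatters_mono {D E : Finset (Finset X)} {Y : Finset X} (h : D ⊆ E)
    (hY : Shatters D Y) : Shatters E Y := by
  intro s hs
  obtain ⟨c, hc, hcs⟩ := hY s hs
  exact ⟨c, h hc, hcs⟩

lemma shatteredSets_mono {D E : Finset (Finset X)} (h : D ⊆ E) :
    shatteredSets D ⊆ shatteredSets E := by
  intro Y hY
  rw [mem_shatteredSets] at hY ⊢
  exact shatters_mono h hY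

lemma shatters_empty {D : Finset (Finset X)} (h : D.Nonempty) : Shatters D ∅ := by
  intro s hs
  rw [Finset.mem_powerset, Finset.subset_empty] at hs
  obtain ⟨c, hc⟩ := h
  exact ⟨c, hc, by simp [hs]⟩

lemma card_le_shattered_of_subsingleton {D : Finset (Finset X)}
    (h : ∀ a ∈ D, ∀ b ∈ D, a = b) : D.card ≤ (shatteredSets D).card := by
  rcases Finset.eq_empty_or_nonempty D with rfl | hne
  · simp
  · have h1 : D.card ≤ 1 := Finset.card_le_one.2 (fun a ha b hb => h a ha b hb)
    have h2 : (1 : ℕ) ≤ (shatteredSets D).card := by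
      rw [Nat.one_le_iff_ne_zero, ← Nat.pos_iff_ne_zero, Finset.card_pos]
      exact ⟨∅, mem_shatteredSets.2 (shatters_empty hne)⟩
    omega

lemma not_mem_shattered_of_forall_not_mem {D : Finset (Finset X)} {Y : Finset X} {x : X}
    (hx : ∀ c ∈ D, x ∉ c) (hY : Shatters D Y) : x ∉ Y := by
  intro hxY
  obtain ⟨c, hc, hcs⟩ := hY {x} (Finset.mem_powerset.2 (Finset.singleton_subset_iff.2 hxY))
  have : x ∈ c ∩ Y := hcs ▸ Finset.mem_singleton_self x
  exact hx c hc (Finset.mem_inter.1 this).1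

lemma not_mem_shattered_of_forall_mem {D : Finset (Finset X)} {Y : Finset X} {x : X}
    (hD : D.Nonempty) (hx : ∀ c ∈ D, x ∈ c) (hY : Shatters D Y) : x ∉ Y := by
  intro hxY
  obtain ⟨c, hc, hcs⟩ := hY ∅ (Finset.mem_powerset.2 (Finset.empty_subset Y))
  have : x ∈ c ∩ Y := Finset.mem_inter.2 ⟨hx c hc, hxY⟩
  rw [hcs] at this
  exact Finset.notMem_empty x this


/-! ### Sauer machinery -/

/-- measure for induction -/
def mu (D : Finset (Finset X)) : ℕ := ∑ c ∈ D, c.card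

lemma mem_restrictX {D : Finset (Finset X)} {z : X} {d : Finset X} :
    d ∈ restrictX D z ↔ ∃ c ∈ D, c.erase z = d := by
  simp [restrictX]

lemma restrictX_card_add_reduction_card (D : Finset (Finset X)) (z : X) :
    (restrictX D z).card + (reduction D z).card = D.card := by
  classical
  set D0 := D.filter (fun c => z ∉ c) with hD0
  set D1 := D.filter (fun c => z ∈ c) with hD1
  have hsplit : D0.card + D1.card = D.card := by
    have h := Finset.card_filter_add_card_filter_not (s := D) (p := fun c => z ∉ c)
    have h2 : D.filter (fun c => ¬ z ∉ c) = D1 := by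
      apply Finset.filter_congr
      intro c _; simp
    rw [h2] at h
    exact h
  have himg : restrictX D z = D0 ∪ D1.image (·.erase z) := by
    ext d
    simp only [mem_restrictX, Finset.mem_union, hD0, hD1, Finset.mem_filter,
      Finset.mem_image]
    constructor
    · rintro ⟨c, hc, rfl⟩
      by_cases hz : z ∈ c
      · right; exact ⟨c, ⟨hc, hz⟩, rfl⟩
      · left; rw [Finset.erase_eq_of_notMem hz]; exact ⟨hc, hz⟩
    · rintro (⟨hd, hz⟩ | ⟨c, ⟨hc, hz⟩, rfl⟩)
      · exact ⟨d, hd, Finset.erase_eq_of_notMem hz⟩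
      · exact ⟨c, hc, rfl⟩
  have hinj : Set.InjOn (fun c : Finset X => c.erase z) (D1 : Set (Finset X)) := by
    intro a ha b hb hab
    have hza : z ∈ a := (Finset.mem_filter.1 ha).2
    have hzb : z ∈ b := (Finset.mem_filter.1 hb).2
    simp only at hab
    have : insert z (a.erase z) = insert z (b.erase z) := by rw [hab]
    rwa [Finset.insert_erase hza, Finset.insert_erase hzb] at this
  have hcard1 : (D1.image (·.erase z)).card = D1.card := Finset.card_image_of_injOn hinj
  have hint : D0 ∩ D1.image (·.erase z) = reduction D z := by
    ext c
    simp only [Finset.mem_inter, hD0, hD1, Finset.mem_filter, Finset.mem_image,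
      reduction]
    constructor
    · rintro ⟨⟨hcD, hzc⟩, c1, ⟨hc1, hz1⟩, hc1e⟩
      refine ⟨hcD, hzc, ?_⟩
      have : c1 = insert z c := by rw [← hc1e, Finset.insert_erase hz1]
      rwa [← this]
    · rintro ⟨hcD, hzc, hins⟩
      exact ⟨⟨hcD, hzc⟩, insert z c, ⟨hins, Finset.mem_insert_self z c⟩,
        by rw [Finset.erase_insert hzc]⟩
  have := Finset.card_union_add_card_inter D0 (D1.image (·.erase z))
  rw [hint] at this
  rw [himg]
  omega

lemma shatteredSets_restrictX_subset (D : Finset (Finset X)) (z : X) :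
    shatteredSets (restrictX D z) ⊆ shatteredSets D := by
  intro Y hY
  rw [mem_shatteredSets] at hY ⊢
  have hzY : z ∉ Y := by
    apply not_mem_shattered_of_forall_not_mem (D := restrictX D z) _ hY
    intro c hc
    obtain ⟨c', _, rfl⟩ := mem_restrictX.1 hc
    simp
  intro s hs
  obtain ⟨d, hd, hds⟩ := hY s hs
  obtain ⟨c, hc, rfl⟩ := mem_restrictX.1 hd
  refine ⟨c, hc, ?_⟩
  rw [← hds]
  ext x
  simp only [Finset.mem_inter, Finset.mem_erase, ne_eq]
  constructor
  · rintro ⟨hxc, hxY⟩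
    exact ⟨⟨fun h => hzY (h ▸ hxY), hxc⟩, hxY⟩
  · rintro ⟨⟨_, hxc⟩, hxY⟩; exact ⟨hxc, hxY⟩

lemma not_mem_of_mem_shattered_reduction {D : Finset (Finset X)} {z : X} {Y : Finset X}
    (hY : Shatters (reduction D z) Y) : z ∉ Y := by
  apply not_mem_shattered_of_forall_not_mem _ hY
  intro c hc
  exact (Finset.mem_filter.1 hc).2.1

lemma shattered_insert_of_reduction {D : Finset (Finset X)} {z : X} {Y : Finset X}
    (hY : Shatters (reduction D z) Y) : Shatters D (insert z Y) := by
  have hzY : z ∉ Y := not_mem_of_mem_shattered_reduction hY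
  intro s hs
  rw [Finset.mem_powerset] at hs
  have hs' : s.erase z ⊆ Y := by
    intro x hx
    have := Finset.mem_erase.1 hx
    have h2 := hs this.2
    rcases Finset.mem_insert.1 h2 with h | h
    · exact absurd h this.1
    · exact h
  obtain ⟨c, hc, hcs⟩ := hY (s.erase z) (Finset.mem_powerset.2 hs')
  have hcD : c ∈ D := (Finset.mem_filter.1 hc).1
  have hzc : z ∉ c := (Finset.mem_filter.1 hc).2.1
  have hcz : insert z c ∈ D := (Finset.mem_filter.1 hc).2.2
  by_cases hzs : z ∈ s
  · refine ⟨insert z c, hcz, ?_⟩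
    ext x
    simp only [Finset.mem_inter, Finset.mem_insert]
    constructor
    · rintro ⟨hx1, hx2⟩
      rcases hx1 with rfl | hx1
      · exact hzs
      · rcases hx2 with rfl | hx2
        · exact hzs
        · have : x ∈ c ∩ Y := Finset.mem_inter.2 ⟨hx1, hx2⟩
          rw [hcs] at this
          exact (Finset.mem_erase.1 this).2
    · intro hx
      by_cases hxz : x = z
      · exact ⟨Or.inl hxz, Or.inl hxz⟩
      · have : x ∈ s.erase z := Finset.mem_erase.2 ⟨hxz, hx⟩
        rw [← hcs] at this
        have := Finset.mem_inter.1 this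
        exact ⟨Or.inr this.1, Or.inr this.2⟩
  · refine ⟨c, hcD, ?_⟩
    have hsY : s ⊆ Y := by
      intro x hx
      rcases Finset.mem_insert.1 (hs hx) with rfl | h
      · exact absurd hx hzs
      · exact h
    have hse : s.erase z = s := Finset.erase_eq_of_notMem hzs
    rw [hse] at hcs
    ext x
    simp only [Finset.mem_inter, Finset.mem_insert]
    constructor
    · rintro ⟨hx1, hx2⟩
      rcases hx2 with rfl | hx2
      · exact absurd hx1 hzc
      · have : x ∈ c ∩ Y := Finset.mem_inter.2 ⟨hx1, hx2⟩
        rw [hcs] at this; exact this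
    · intro hx
      have : x ∈ c ∩ Y := by rw [hcs]; exact hx
      have := Finset.mem_inter.1 this
      exact ⟨this.1, Or.inr this.2⟩

lemma shattered_sum_le (D : Finset (Finset X)) (z : X) :
    (shatteredSets (restrictX D z)).card + (shatteredSets (reduction D z)).card
      ≤ (shatteredSets D).card := by
  classical
  set A := shatteredSets (restrictX D z)
  set B := (shatteredSets (reduction D z)).image (insert z)
  have hBcard : B.card = (shatteredSets (reduction D z)).card := by
    apply Finset.card_image_of_injOn
    intro a ha b hb hab
    have hza : z ∉ a := not_mem_of_mem_shattered_reduction (mem_shatteredSets.1 ha)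
    have hzb : z ∉ b := not_mem_of_mem_shattered_reduction (mem_shatteredSets.1 hb)
    have : (insert z a).erase z = (insert z b).erase z := by rw [hab]
    rwa [Finset.erase_insert hza, Finset.erase_insert hzb] at this
  have hdisj : Disjoint A B := by
    rw [Finset.disjoint_left]
    intro Y hYA hYB
    have hzY : z ∉ Y := by
      apply not_mem_shattered_of_forall_not_mem (D := restrictX D z) _
        (mem_shatteredSets.1 hYA)
      intro c hc
      obtain ⟨c', _, rfl⟩ := mem_restrictX.1 hc
      simp
    obtain ⟨Y', _, rfl⟩ := Finset.mem_image.1 hYB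
    exact hzY (Finset.mem_insert_self z Y')
  have hsub : A ∪ B ⊆ shatteredSets D := by
    intro Y hY
    rcases Finset.mem_union.1 hY with h | h
    · exact shatteredSets_restrictX_subset D z h
    · obtain ⟨Y', hY', rfl⟩ := Finset.mem_image.1 h
      exact mem_shatteredSets.2 (shattered_insert_of_reduction (mem_shatteredSets.1 hY'))
  calc A.card + (shatteredSets (reduction D z)).card = A.card + B.card := by rw [hBcard]
    _ = (A ∪ B).card := (Finset.card_union_of_disjoint hdisj).symm
    _ ≤ (shatteredSets D).card := Finset.card_le_card hsub

lemma sum_image_le {α β : Type*} [DecidableEq β] (s : Finset α) (f : α → β) (g : β → ℕ) :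
    ∑ b ∈ s.image f, g b ≤ ∑ a ∈ s, g (f a) := by
  classical
  induction s using Finset.induction_on with
  | empty => simp
  | insert a s hx ih =>
    rw [Finset.image_insert, Finset.sum_insert hx]
    by_cases hfa : f a ∈ s.image f
    · rw [Finset.insert_eq_self.2 hfa]
      omega
    · rw [Finset.sum_insert hfa]
      omega

lemma mu_restrictX_lt {D : Finset (Finset X)} {z : X} {u : Finset X} (hu : u ∈ D)
    (hz : z ∈ u) : mu (restrictX D z) < mu D := by
  have h1 : mu (restrictX D z) ≤ ∑ c ∈ D, (c.erase z).card :=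
    sum_image_le D (·.erase z) Finset.card
  have h2 : ∑ c ∈ D, (c.erase z).card < ∑ c ∈ D, c.card := by
    apply Finset.sum_lt_sum
    · intro i _; exact Finset.card_le_card (Finset.erase_subset z i)
    · refine ⟨u, hu, ?_⟩
      rw [Finset.card_erase_of_mem hz]
      have : 0 < u.card := Finset.card_pos.2 ⟨z, hz⟩
      omega
  exact lt_of_le_of_lt h1 h2

lemma mu_reduction_lt {D : Finset (Finset X)} {z : X} {u : Finset X} (hu : u ∈ D)
    (hz : z ∈ u) : mu (reduction D z) < mu D := by
  have hsub : reduction D z ⊆ D.erase u := by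
    intro c hc
    rw [Finset.mem_erase]
    have := Finset.mem_filter.1 hc
    refine ⟨?_, this.1⟩
    rintro rfl
    exact this.2.1 hz
  have h1 : mu (reduction D z) ≤ mu (D.erase u) := by
    apply Finset.sum_le_sum_of_subset hsub
  have h2 : mu (D.erase u) + u.card = mu D := Finset.sum_erase_add D Finset.card hu
  have h3 : 0 < u.card := Finset.card_pos.2 ⟨z, hz⟩
  omega

lemma sauer_aux : ∀ n, ∀ D : Finset (Finset X), mu D ≤ n →
    D.card ≤ (shatteredSets D).card := by
  intro n
  induction n with
  | zero =>
    intro D hD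
    apply card_le_shattered_of_subsingleton
    intro a ha b hb
    have ha' : a.card = 0 := by
      have : a.card ≤ mu D := Finset.single_le_sum (f := Finset.card)
        (fun i _ => Nat.zero_le _) ha
      omega
    have hb' : b.card = 0 := by
      have : b.card ≤ mu D := Finset.single_le_sum (f := Finset.card)
        (fun i _ => Nat.zero_le _) hb
      omega
    rw [Finset.card_eq_zero.1 ha', Finset.card_eq_zero.1 hb']
  | succ n ih =>
    intro D hD
    by_cases htriv : ∀ a ∈ D, ∀ b ∈ D, a = b
    · exact card_le_shattered_of_subsingleton htriv
    · push_neg at htriv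
      obtain ⟨u, hu, v, hv, huv⟩ := htriv
      have hsd : (sd u v).Nonempty := by
        rw [Finset.nonempty_iff_ne_empty]
        intro h
        exact huv (sd_eq_empty_iff.1 h)
      obtain ⟨z, hz⟩ := hsd
      have hzmem : ∃ w ∈ D, z ∈ w := by
        rcases mem_sd.1 hz with h
        by_cases hzu : z ∈ u
        · exact ⟨u, hu, hzu⟩
        · exact ⟨v, hv, by tauto⟩
      obtain ⟨w, hw, hzw⟩ := hzmem
      have h1 : mu (restrictX D z) ≤ n := by
        have := mu_restrictX_lt hw hzw; omega
      have h2 : mu (reduction D z) ≤ n := by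
        have := mu_reduction_lt hw hzw; omega
      have := restrictX_card_add_reduction_card D z
      have i1 := ih (restrictX D z) h1
      have i2 := ih (reduction D z) h2
      have i3 := shattered_sum_le D z
      omega

lemma sauer (D : Finset (Finset X)) : D.card ≤ (shatteredSets D).card :=
  sauer_aux (mu D) D le_rfl

lemma ample_restrictX {D : Finset (Finset X)} (hD : IsAmple D) (z : X) :
    IsAmple (restrictX D z) := by
  have h1 := restrictX_card_add_reduction_card D z
  have h2 := shattered_sum_le D z
  have h3 := sauer (restrictX D z)
  have h4 := sauer (reduction D z)
  unfold IsAmple at hD ⊢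
  omega


/-! ### halfspaces -/

lemma shatters_insert_of_both {D : Finset (Finset X)} {Y : Finset X} {x : X}
    (h0 : Shatters (D.filter (fun c => x ∉ c)) Y)
    (h1 : Shatters (D.filter (fun c => x ∈ c)) Y) :
    Shatters D (insert x Y) := by
  intro s hs
  rw [Finset.mem_powerset] at hs
  by_cases hxs : x ∈ s
  · have hs' : s.erase x ⊆ Y := by
      intro w hw
      have h := Finset.mem_erase.1 hw
      rcases Finset.mem_insert.1 (hs h.2) with h' | h'
      · exact absurd h' h.1
      · exact h'
    obtain ⟨c, hc, hcs⟩ := h1 (s.erase x) (Finset.mem_powerset.2 hs')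
    have hcD := (Finset.mem_filter.1 hc).1
    have hxc := (Finset.mem_filter.1 hc).2
    refine ⟨c, hcD, ?_⟩
    ext w
    simp only [Finset.mem_inter, Finset.mem_insert]
    constructor
    · rintro ⟨hw1, hw2⟩
      rcases hw2 with rfl | hw2
      · exact hxs
      · have : w ∈ c ∩ Y := Finset.mem_inter.2 ⟨hw1, hw2⟩
        rw [hcs] at this
        exact (Finset.mem_erase.1 this).2
    · intro hw
      by_cases hwx : w = x
      · subst hwx; exact ⟨hxc, Or.inl rfl⟩
      · have : w ∈ s.erase x := Finset.mem_erase.2 ⟨hwx, hw⟩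
        rw [← hcs] at this
        have := Finset.mem_inter.1 this
        exact ⟨this.1, Or.inr this.2⟩
  · have hs' : s ⊆ Y := by
      intro w hw
      rcases Finset.mem_insert.1 (hs hw) with rfl | h'
      · exact absurd hw hxs
      · exact h'
    obtain ⟨c, hc, hcs⟩ := h0 s (Finset.mem_powerset.2 hs')
    have hcD := (Finset.mem_filter.1 hc).1
    have hxc := (Finset.mem_filter.1 hc).2
    refine ⟨c, hcD, ?_⟩
    rw [← hcs]
    ext w
    simp only [Finset.mem_inter, Finset.mem_insert]
    constructor
    · rintro ⟨hw1, hw2⟩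
      rcases hw2 with rfl | hw2
      · exact absurd hw1 hxc
      · exact ⟨hw1, hw2⟩
    · rintro ⟨hw1, hw2⟩
      exact ⟨hw1, Or.inr hw2⟩

lemma halfspace_shattered_sum_le (D : Finset (Finset X)) (x : X) :
    (shatteredSets (D.filter (fun c => x ∉ c))).card
      + (shatteredSets (D.filter (fun c => x ∈ c))).card ≤ (shatteredSets D).card := by
  classical
  set S0 := shatteredSets (D.filter (fun c => x ∉ c)) with hS0
  set S1 := shatteredSets (D.filter (fun c => x ∈ c)) with hS1
  have hx0 : ∀ Y ∈ S0, x ∉ Y := by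
    intro Y hY
    apply not_mem_shattered_of_forall_not_mem _ (mem_shatteredSets.1 hY)
    intro c hc
    exact (Finset.mem_filter.1 hc).2
  have hx1 : ∀ Y ∈ S1, x ∉ Y := by
    intro Y hY
    have hsh := mem_shatteredSets.1 hY
    have hne : (D.filter (fun c => x ∈ c)).Nonempty := by
      obtain ⟨c, hc, -⟩ := hsh ∅ (Finset.mem_powerset.2 (Finset.empty_subset Y))
      exact ⟨c, hc⟩
    exact not_mem_shattered_of_forall_mem hne (fun c hc => (Finset.mem_filter.1 hc).2) hsh
  set f : Finset X → Finset X := fun Y => if Y ∈ S0 then insert x Y else Y with hf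
  set B := S1.image f with hB
  have hBcard : B.card = S1.card := by
    apply Finset.card_image_of_injOn
    intro a ha b hb hab
    simp only [hf] at hab
    by_cases ha0 : a ∈ S0 <;> by_cases hb0 : b ∈ S0
    · rw [if_pos ha0, if_pos hb0] at hab
      have : (insert x a).erase x = (insert x b).erase x := by rw [hab]
      rwa [Finset.erase_insert (hx1 a ha), Finset.erase_insert (hx1 b hb)] at this
    · rw [if_pos ha0, if_neg hb0] at hab
      exfalso
      have : x ∈ b := hab ▸ Finset.mem_insert_self x a
      exact hx1 b hb this
    · rw [if_neg ha0, if_pos hb0] at hab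
      exfalso
      have : x ∈ a := by rw [hab]; exact Finset.mem_insert_self x b
      exact hx1 a ha this
    · rwa [if_neg ha0, if_neg hb0] at hab
  have hdisj : Disjoint S0 B := by
    rw [Finset.disjoint_left]
    intro Y hY0 hYB
    obtain ⟨Y', hY', rfl⟩ := Finset.mem_image.1 hYB
    simp only [hf] at hY0 ⊢
    by_cases h' : Y' ∈ S0
    · rw [if_pos h'] at hY0
      exact hx0 _ hY0 (Finset.mem_insert_self x Y')
    · rw [if_neg h'] at hY0
      exact h' hY0
  have hsub : S0 ∪ B ⊆ shatteredSets D := by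
    intro Y hY
    rcases Finset.mem_union.1 hY with h | h
    · exact shatteredSets_mono (Finset.filter_subset _ D) h
    · obtain ⟨Y', hY', rfl⟩ := Finset.mem_image.1 h
      simp only [hf]
      by_cases h' : Y' ∈ S0
      · rw [if_pos h']
        exact mem_shatteredSets.2 (shatters_insert_of_both (mem_shatteredSets.1 h')
          (mem_shatteredSets.1 hY'))
      · rw [if_neg h']
        exact shatteredSets_mono (Finset.filter_subset _ D) hY'
  calc S0.card + S1.card = S0.card + B.card := by rw [hBcard]
    _ = (S0 ∪ B).card := (Finset.card_union_of_disjoint hdisj).symm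
    _ ≤ (shatteredSets D).card := Finset.card_le_card hsub

lemma ample_halfspace {D : Finset (Finset X)} (hD : IsAmple D) (x : X) :
    IsAmple (D.filter (fun c => x ∉ c)) ∧ IsAmple (D.filter (fun c => x ∈ c)) := by
  have h0 := sauer (D.filter (fun c => x ∉ c))
  have h1 := sauer (D.filter (fun c => x ∈ c))
  have h2 := halfspace_shattered_sum_le D x
  have h3 : (D.filter (fun c => x ∉ c)).card + (D.filter (fun c => x ∈ c)).card = D.card := by
    have h := Finset.card_filter_add_card_filter_not (s := D) (p := fun c => x ∉ c)
    have h4 : D.filter (fun c => ¬ x ∉ c) = D.filter (fun c => x ∈ c) := by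
      apply Finset.filter_congr
      intro c _; simp
    rw [h4] at h
    exact h
  unfold IsAmple at hD ⊢
  omega

lemma ample_agree_filter {D : Finset (Finset X)} (hD : IsAmple D) (v : Finset X) :
    ∀ s : Finset X, IsAmple (D.filter (fun c => ∀ y ∈ s, (y ∈ c ↔ y ∈ v))) := by
  classical
  intro s
  induction s using Finset.induction_on with
  | empty =>
    have : D.filter (fun c => ∀ y ∈ (∅ : Finset X), (y ∈ c ↔ y ∈ v)) = D := by
      apply Finset.filter_true_of_mem
      intro c _ y hy
      exact absurd hy (Finset.notMem_empty y)
    rwa [this]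
  | insert x s hx ih =>
    by_cases hxv : x ∈ v
    · have heq : D.filter (fun c => ∀ y ∈ insert x s, (y ∈ c ↔ y ∈ v))
          = (D.filter (fun c => ∀ y ∈ s, (y ∈ c ↔ y ∈ v))).filter (fun c => x ∈ c) := by
        rw [Finset.filter_filter]
        apply Finset.filter_congr
        intro c _
        simp only [Finset.mem_insert]
        constructor
        · intro h
          exact ⟨fun y hy => h y (Or.inr hy), (h x (Or.inl rfl)).2 hxv⟩
        · rintro ⟨h1, h2⟩ y hy
          rcases hy with rfl | hy
          · exact ⟨fun _ => hxv, fun _ => h2⟩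
          · exact h1 y hy
      rw [heq]
      exact (ample_halfspace ih x).2
    · have heq : D.filter (fun c => ∀ y ∈ insert x s, (y ∈ c ↔ y ∈ v))
          = (D.filter (fun c => ∀ y ∈ s, (y ∈ c ↔ y ∈ v))).filter (fun c => x ∉ c) := by
        rw [Finset.filter_filter]
        apply Finset.filter_congr
        intro c _
        simp only [Finset.mem_insert]
        constructor
        · intro h
          refine ⟨fun y hy => h y (Or.inr hy), fun hc => hxv ((h x (Or.inl rfl)).1 hc)⟩
        · rintro ⟨h1, h2⟩ y hy
          rcases hy with rfl | hy
          · exact ⟨fun hc => absurd hc h2, fun hv => absurd hv hxv⟩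
          · exact h1 y hy
      rw [heq]
      exact (ample_halfspace ih x).1

lemma ample_inter_cube {D : Finset (Finset X)} (hD : IsAmple D) (v Y : Finset X) :
    IsAmple (D.filter (fun c => c ∈ cubeAt v Y)) := by
  classical
  have h := ample_agree_filter hD v (Finset.univ \ Y)
  have heq : D.filter (fun c => ∀ y ∈ Finset.univ \ Y, (y ∈ c ↔ y ∈ v))
      = D.filter (fun c => c ∈ cubeAt v Y) := by
    apply Finset.filter_congr
    intro c _
    simp only [Finset.mem_sdiff, Finset.mem_univ, true_and, mem_cubeAt]
    constructor
    · intro hagree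
      ext w
      simp only [Finset.mem_sdiff]
      by_cases hwY : w ∈ Y
      · simp [hwY]
      · simp only [hwY, not_false_iff, and_true]
        exact hagree w hwY
    · intro hcv y hyY
      have := Finset.ext_iff.1 hcv y
      simp only [Finset.mem_sdiff, hyY, not_false_iff, and_true] at this
      exact this
  rwa [heq] at h


/-! ### ample classes: local structure -/

lemma eq_of_agree_outside {d e S : Finset X} (h : d \ S = e \ S)
    (hS : ∀ z ∈ S, (z ∈ d ↔ z ∈ e)) : d = e := by
  ext z
  by_cases hz : z ∈ S
  · exact hS z hz
  · have := Finset.ext_iff.1 h z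
    simp only [Finset.mem_sdiff, hz, not_false_iff, and_true] at this
    exact this

lemma eq_sd_of_agree {d v S s : Finset X} (hs : s ⊆ S) (h : d \ S = v \ S)
    (hmem : ∀ z ∈ S, ((z ∈ d ↔ z ∈ v) ↔ z ∉ s)) : d = sd v s := by
  ext z
  by_cases hz : z ∈ S
  · have h1 := hmem z hz
    rw [mem_sd]
    tauto
  · have hzs : z ∉ s := fun hzs => hz (hs hzs)
    have := Finset.ext_iff.1 h z
    simp only [Finset.mem_sdiff, hz, not_false_iff, and_true] at this
    rw [mem_sd]
    tauto

/-- In an ample class, if `v` and a concept at distance 2 are both present then one of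
the middle vertices is present. -/
lemma middle_of_ample {D : Finset (Finset X)} (hD : IsAmple D) {v c : Finset X} {x y : X}
    (hv : v ∈ D) (hc : c ∈ D) (hxy : sd v c = {x, y}) (hxney : x ≠ y) :
    sd v {x} ∈ D ∨ sd v {y} ∈ D := by
  classical
  by_contra hmid
  push_neg at hmid
  obtain ⟨hmx, hmy⟩ := hmid
  set E := D.filter (fun d => d ∈ cubeAt v {x, y}) with hE
  have hEample : IsAmple E := ample_inter_cube hD v {x, y}
  have hvE : v ∈ E := Finset.mem_filter.2 ⟨hv, self_mem_cubeAt v {x, y}⟩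
  have hsdvc : ∀ w, w ∈ sd v c ↔ (w = x ∨ w = y) := by
    intro w
    rw [hxy]
    simp
  have hcE : c ∈ E := by
    refine Finset.mem_filter.2 ⟨hc, ?_⟩
    rw [mem_cubeAt]
    ext w
    simp only [Finset.mem_sdiff, Finset.mem_insert, Finset.mem_singleton]
    have hw := hsdvc w
    rw [mem_sd] at hw
    constructor
    · rintro ⟨hw1, hw2⟩
      push_neg at hw2
      exact ⟨by tauto, by tauto⟩
    · rintro ⟨hw1, hw2⟩
      exact ⟨by tauto, by tauto⟩
  have hvc : v ≠ c := by
    intro h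
    have h2 : sd v c = ∅ := sd_eq_empty_iff.2 h
    rw [hxy] at h2
    have := Finset.ext_iff.1 h2 x
    simp at this
  have hxv : (x ∈ v ↔ x ∉ c) := by
    have := (hsdvc x).2 (Or.inl rfl)
    rwa [mem_sd] at this
  have hyv : (y ∈ v ↔ y ∉ c) := by
    have := (hsdvc y).2 (Or.inr rfl)
    rwa [mem_sd] at this
  have hEsub : E ⊆ {v, c} := by
    intro d hd
    have hdD := (Finset.mem_filter.1 hd).1
    have hdc : d \ ({x, y} : Finset X) = v \ {x, y} := mem_cubeAt.1 (Finset.mem_filter.1 hd).2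
    simp only [Finset.mem_insert, Finset.mem_singleton]
    by_cases hdx : x ∈ d ↔ x ∈ v <;> by_cases hdy : y ∈ d ↔ y ∈ v
    · left
      apply eq_of_agree_outside hdc
      intro z hz
      rcases Finset.mem_insert.1 hz with rfl | hz'
      · exact hdx
      · rw [Finset.mem_singleton] at hz'; subst hz'; exact hdy
    · exfalso
      apply hmy
      have hgoal : d = sd v {y} := by
        apply eq_sd_of_agree (S := {x, y}) _ hdc
        · intro z hz
          rcases Finset.mem_insert.1 hz with rfl | hz'
          · simp only [Finset.mem_singleton]
            constructor
            · intro _ h; exact hxney h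
            · intro _; exact hdx
          · rw [Finset.mem_singleton] at hz'; subst hz'
            simp only [Finset.mem_singleton]
            tauto
        · intro w hw
          rw [Finset.mem_singleton] at hw; subst hw
          simp
      rw [← hgoal]; exact hdD
    · exfalso
      apply hmx
      have hgoal : d = sd v {x} := by
        apply eq_sd_of_agree (S := {x, y}) _ hdc
        · intro z hz
          rcases Finset.mem_insert.1 hz with rfl | hz'
          · simp only [Finset.mem_singleton]
            tauto
          · rw [Finset.mem_singleton] at hz'; subst hz'
            simp only [Finset.mem_singleton]
            constructor
            · intro _ h; exact hxney h.symm
            · intro _; exact hdy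
        · intro w hw
          rw [Finset.mem_singleton] at hw; subst hw
          simp
      rw [← hgoal]; exact hdD
    · right
      have hceq : c = sd v ({x, y} : Finset X) := by
        apply eq_sd_of_agree (S := {x, y}) (Finset.Subset.refl _)
        · have : c \ ({x, y} : Finset X) = v \ {x, y} :=
            mem_cubeAt.1 (Finset.mem_filter.1 hcE).2
          exact this
        · intro z hz
          rcases Finset.mem_insert.1 hz with rfl | hz'
          · simp only [Finset.mem_insert, Finset.mem_singleton]
            tauto
          · rw [Finset.mem_singleton] at hz'; subst hz'
            simp only [Finset.mem_insert, Finset.mem_singleton]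
            tauto
      have hdeq : d = sd v ({x, y} : Finset X) := by
        apply eq_sd_of_agree (S := {x, y}) (Finset.Subset.refl _) hdc
        intro z hz
        rcases Finset.mem_insert.1 hz with rfl | hz'
        · simp only [Finset.mem_insert, Finset.mem_singleton]
          tauto
        · rw [Finset.mem_singleton] at hz'; subst hz'
          simp only [Finset.mem_insert, Finset.mem_singleton]
          tauto
      rw [hdeq, ← hceq]
  have hEcard : E.card = 2 := by
    have h1 : ({v, c} : Finset (Finset X)) ⊆ E := by
      intro d hd
      rcases Finset.mem_insert.1 hd with rfl | hd
      · exact hvE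
      · rw [Finset.mem_singleton] at hd; subst hd; exact hcE
    have := Finset.Subset.antisymm hEsub h1
    rw [this, Finset.card_insert_of_notMem (by simpa using hvc), Finset.card_singleton]
  have hsh : ({∅, {x}, {y}} : Finset (Finset X)) ⊆ shatteredSets E := by
    intro s hs
    rw [mem_shatteredSets]
    simp only [Finset.mem_insert, Finset.mem_singleton] at hs
    rcases hs with rfl | rfl | rfl
    · exact shatters_empty ⟨v, hvE⟩
    · intro t ht
      rw [Finset.mem_powerset, Finset.subset_singleton_iff] at ht
      rcases ht with rfl | rfl
      · by_cases h : x ∈ v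
        · exact ⟨c, hcE, by rw [Finset.inter_comm, Finset.singleton_inter_of_notMem (by tauto)]⟩
        · exact ⟨v, hvE, by rw [Finset.inter_comm, Finset.singleton_inter_of_notMem h]⟩
      · by_cases h : x ∈ v
        · exact ⟨v, hvE, by rw [Finset.inter_comm, Finset.singleton_inter_of_mem h]⟩
        · exact ⟨c, hcE, by rw [Finset.inter_comm, Finset.singleton_inter_of_mem (by tauto)]⟩
    · intro t ht
      rw [Finset.mem_powerset, Finset.subset_singleton_iff] at ht
      rcases ht with rfl | rfl
      · by_cases h : y ∈ v
        · exact ⟨c, hcE, by rw [Finset.inter_comm, Finset.singleton_inter_of_notMem (by tauto)]⟩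
        · exact ⟨v, hvE, by rw [Finset.inter_comm, Finset.singleton_inter_of_notMem h]⟩
      · by_cases h : y ∈ v
        · exact ⟨v, hvE, by rw [Finset.inter_comm, Finset.singleton_inter_of_mem h]⟩
        · exact ⟨c, hcE, by rw [Finset.inter_comm, Finset.singleton_inter_of_mem (by tauto)]⟩
  have hcard3 : ({∅, {x}, {y}} : Finset (Finset X)).card = 3 := by
    rw [Finset.card_insert_of_notMem, Finset.card_insert_of_notMem, Finset.card_singleton]
    · simp only [Finset.mem_singleton]
      intro h
      have := Finset.ext_iff.1 h x
      simp [hxney] at this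
    · simp only [Finset.mem_insert, Finset.mem_singleton]
      push_neg
      constructor
      · intro h
        have := Finset.ext_iff.1 h x
        simp at this
      · intro h
        have := Finset.ext_iff.1 h y
        simp at this
  have : (3 : ℕ) ≤ (shatteredSets E).card := by
    calc (3:ℕ) = ({∅, {x}, {y}} : Finset (Finset X)).card := hcard3.symm
      _ ≤ (shatteredSets E).card := Finset.card_le_card hsh
  unfold IsAmple at hEample
  omega


/-- In an ample class, any concept `v` has a neighbor towards any other concept `u`. -/
lemma neighbor_toward_aux : ∀ n, ∀ D : Finset (Finset X), mu D ≤ n → IsAmple D →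
    ∀ u v : Finset X, u ∈ D → v ∈ D → u ≠ v → ∃ y ∈ sd u v, sd v {y} ∈ D := by
  intro n
  induction n with
  | zero =>
    intro D hmu hD u v hu hv huv
    exfalso
    have hucard : u.card = 0 := by
      have : u.card ≤ mu D := Finset.single_le_sum (f := Finset.card)
        (fun i _ => Nat.zero_le _) hu
      omega
    have hvcard : v.card = 0 := by
      have : v.card ≤ mu D := Finset.single_le_sum (f := Finset.card)
        (fun i _ => Nat.zero_le _) hv
      omega
    exact huv (by rw [Finset.card_eq_zero.1 hucard, Finset.card_eq_zero.1 hvcard])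
  | succ n ih =>
    intro D hmu hD u v hu hv huv
    have hsd : (sd u v).Nonempty := by
      rw [Finset.nonempty_iff_ne_empty]
      intro h
      exact huv (sd_eq_empty_iff.1 h)
    obtain ⟨z, hz⟩ := hsd
    by_cases hsingle : sd u v = {z}
    · refine ⟨z, hz, ?_⟩
      have : sd v {z} = u := by
        rw [← hsingle, sd_comm u v, sd_sd_cancel]
      rwa [this]
    · -- restrict along z
      have hzmem : ∃ w ∈ D, z ∈ w := by
        rw [mem_sd] at hz
        by_cases hzu : z ∈ u
        · exact ⟨u, hu, hzu⟩
        · exact ⟨v, hv, by tauto⟩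
      obtain ⟨w, hw, hzw⟩ := hzmem
      have hmu' : mu (restrictX D z) ≤ n := by
        have := mu_restrictX_lt hw hzw; omega
      have hD' : IsAmple (restrictX D z) := ample_restrictX hD z
      have hu' : u.erase z ∈ restrictX D z := mem_restrictX.2 ⟨u, hu, rfl⟩
      have hv' : v.erase z ∈ restrictX D z := mem_restrictX.2 ⟨v, hv, rfl⟩
      have hne' : u.erase z ≠ v.erase z := by
        intro h
        have h2 : sd (u.erase z) (v.erase z) = ∅ := sd_eq_empty_iff.2 h
        rw [erase_sd] at h2
        -- sd u v ⊆ {z} then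
        have hsub : sd u v ⊆ {z} := by
          intro w' hw'
          rw [Finset.mem_singleton]
          by_contra hwz
          have : w' ∈ (sd u v).erase z := Finset.mem_erase.2 ⟨hwz, hw'⟩
          rw [h2] at this
          exact Finset.notMem_empty w' this
        rcases Finset.subset_singleton_iff.1 hsub with h3 | h3
        · exact huv (sd_eq_empty_iff.1 h3)
        · exact hsingle h3
      obtain ⟨y, hy, hvy⟩ := ih (restrictX D z) hmu' hD' (u.erase z) (v.erase z) hu' hv' hne'
      rw [erase_sd, Finset.mem_erase] at hy
      obtain ⟨hyz, hyuv⟩ := hy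
      rw [sd_erase_of_ne hyz] at hvy
      obtain ⟨cc, hcc, hcce⟩ := mem_restrictX.1 hvy
      rcases erase_eq_erase_cases hcce with h1 | h1
      · exact ⟨y, hyuv, by rwa [← h1]⟩
      · -- cc = sd (sd v {y}) {z} = sd v {y, z}
        have h2 : cc = sd v ({y, z} : Finset X) := by
          rw [h1, sd_comm (sd v {y}) {z}]
          rw [← sd_sd_singleton hyz]
          rw [sd_comm {z} (sd v {y})]
        have h3 : sd v cc = {y, z} := by
          rw [h2, sd_sd_cancel]
        rcases middle_of_ample hD hv hcc h3 hyz with h | h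
        · exact ⟨y, hyuv, h⟩
        · refine ⟨z, hz, h⟩

lemma neighbor_toward {D : Finset (Finset X)} (hD : IsAmple D) {u v : Finset X}
    (hu : u ∈ D) (hv : v ∈ D) (huv : u ≠ v) : ∃ y ∈ sd u v, sd v {y} ∈ D :=
  neighbor_toward_aux (mu D) D le_rfl hD u v hu hv huv

/-- removing a corner from an ample class yields an ample class -/
lemma ample_erase_corner {D : Finset (Finset X)} (hD : IsAmple D) {c : Finset X}
    (hc : IsCornerOf D c) : IsAmple (D.erase c) := by
  classical
  obtain ⟨hcD, B, ⟨hBmax, hcB⟩, huniq⟩ := hc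
  obtain ⟨Y, hBY⟩ := hBmax.1.2
  have hBcube : B = cubeAt c Y := isCubeS_eq_cubeAt hBY hcB
  have hBD : B ⊆ D := hBmax.1.1
  -- Y is shattered by D
  have hYsh : Shatters D Y := by
    intro s hs
    rw [Finset.mem_powerset] at hs
    refine ⟨(c \ Y) ∪ s, hBD ?_, ?_⟩
    · rw [hBcube, mem_cubeAt]
      ext w
      simp only [Finset.mem_sdiff, Finset.mem_union]
      have hsw : w ∈ s → w ∈ Y := fun h => hs h
      tauto
    · ext w
      simp only [Finset.mem_inter, Finset.mem_union, Finset.mem_sdiff]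
      have hsw : w ∈ s → w ∈ Y := fun h => hs h
      tauto
  -- c is the unique realizer of its pattern on Y
  have huniqreal : ∀ c' ∈ D, c' ∩ Y = c ∩ Y → c' = c := by
    intro c' hc' hcc
    by_contra hne
    obtain ⟨y, hy, hcy⟩ := neighbor_toward hD hc' hcD hne
    have hyY : y ∉ Y := by
      intro hyY
      rw [mem_sd] at hy
      have := Finset.ext_iff.1 hcc y
      simp only [Finset.mem_inter, hyY, and_true] at this
      tauto
    -- the edge {c, sd c {y}} is a cube of D containing c
    have hedge : cubeAt c {y} ⊆ D := cubeAt_singleton_sub hcD hcy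
    have hedgecube : IsCubeOf D (cubeAt c {y}) := ⟨hedge, {y}, isCubeS_cubeAt c {y}⟩
    have hsubB : cubeAt c {y} ⊆ B :=
      cube_subset_of_corner ⟨hBmax, hcB⟩ (fun B' hB' => huniq B' hB') hedgecube
        (self_mem_cubeAt c {y})
    rw [hBcube] at hsubB
    have : ({y} : Finset X) ⊆ Y := subset_of_cubeAt_subset hsubB
    exact hyY (this (Finset.mem_singleton_self y))
  have hnotsh : ¬ Shatters (D.erase c) Y := by
    intro hsh
    obtain ⟨c', hc', hcs⟩ := hsh (c ∩ Y) (Finset.mem_powerset.2 Finset.inter_subset_right)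
    have := huniqreal c' (Finset.mem_of_mem_erase hc') hcs
    subst this
    exact (Finset.mem_erase.1 hc').1 rfl
  have hssub : shatteredSets (D.erase c) ⊂ shatteredSets D := by
    constructor
    · exact shatteredSets_mono (Finset.erase_subset c D)
    · intro h
      exact hnotsh (mem_shatteredSets.1 (h (mem_shatteredSets.2 hYsh)))
  have h1 : (shatteredSets (D.erase c)).card < (shatteredSets D).card :=
    Finset.card_lt_card hssub
  have h2 := sauer (D.erase c)
  have h3 : (D.erase c).card = D.card - 1 := Finset.card_erase_of_mem hcD
  have h4 : 0 < D.card := Finset.card_pos.2 ⟨c, hcD⟩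
  unfold IsAmple at hD ⊢
  omega


/-! ### the counting lemma for (C2) -/

lemma singleton_inter_empty_iff {s : Finset X} {x : X} : s ∩ {x} = ∅ ↔ x ∉ s := by
  constructor
  · intro h hx
    have : x ∈ s ∩ {x} := Finset.mem_inter.2 ⟨hx, Finset.mem_singleton_self x⟩
    rw [h] at this
    exact Finset.notMem_empty x this
  · intro h
    ext w
    simp only [Finset.mem_inter, Finset.mem_singleton, Finset.notMem_empty, iff_false]
    rintro ⟨hw, rfl⟩
    exact h hw

lemma cubeAt_singleton_eq (a : Finset X) (x : X) :
    cubeAt a {x} = {a, sd a {x}} := by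
  apply Finset.Subset.antisymm
  · intro d hd
    rw [mem_cubeAt] at hd
    have : d.erase x = a.erase x := by
      rw [← Finset.sdiff_singleton_eq_erase, ← Finset.sdiff_singleton_eq_erase]
      exact hd
    rcases erase_eq_erase_cases this with h1 | h1
    · rw [h1]; exact Finset.mem_insert_self a _
    · rw [h1]; simp
  · intro d hd
    rcases Finset.mem_insert.1 hd with hda | hd
    · rw [hda]; exact self_mem_cubeAt a {x}
    · rw [Finset.mem_singleton] at hd; subst hd
      exact sd_mem_cubeAt (self_mem_cubeAt a {x}) (Finset.Subset.refl _)

/-- orientation is well defined on edges -/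
lemma edge_orient {C : Finset (Finset X)} {r : Finset X → Finset X} (hC2 : CondC2 C r)
    {a b : Finset X} {x : X} (ha : a ∈ C) (hb : b ∈ C) (hab : sd a b = {x}) :
    (x ∈ r a ↔ x ∉ r b) := by
  have hbne : a ≠ b := by
    intro h
    rw [sd_eq_empty_iff.2 h] at hab
    have := Finset.ext_iff.1 hab x
    simp at this
  have hbval : b = sd a {x} := by rw [← hab, sd_sd_cancel]
  have hsub : cubeAt a {x} ⊆ C := cubeAt_singleton_sub ha (hbval ▸ hb)
  obtain ⟨w, ⟨hw, hwr⟩, hwu⟩ := hC2 (cubeAt a {x}) {x} hsub (isCubeS_cubeAt a {x})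
  rw [cubeAt_singleton_eq] at hw
  rw [← hbval] at hw
  rcases Finset.mem_insert.1 hw with hwa | hwb
  · subst hwa
    have hxa : x ∉ r w := singleton_inter_empty_iff.1 hwr
    have hxb : x ∈ r b := by
      by_contra hxb
      have hb2 : b = w := hwu b ⟨by rw [cubeAt_singleton_eq, ← hbval]; simp,
        singleton_inter_empty_iff.2 hxb⟩
      exact hbne hb2.symm
    constructor
    · intro h; exact absurd h hxa
    · intro h; exact absurd hxb h
  · rw [Finset.mem_singleton] at hwb
    subst hwb
    have hxb : x ∉ r w := singleton_inter_empty_iff.1 hwr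
    have hxa : x ∈ r a := by
      by_contra hxa
      have ha2 : a = w := hwu a ⟨by rw [cubeAt_singleton_eq, ← hbval]; simp,
        singleton_inter_empty_iff.2 hxa⟩
      exact hbne ha2
    constructor
    · intro _; exact hxb
    · intro _; exact hxa

/-- the counting lemma : in every cube of `C`, for each `T ⊆ Y` there is exactly one
vertex whose outmap equals `T`. -/
lemma counting_lemma {C : Finset (Finset X)} {r : Finset X → Finset X} (hC2 : CondC2 C r)
    {c₀ Y : Finset X} (hQ : cubeAt c₀ Y ⊆ C) :
    ∀ k (T : Finset X), T.card ≤ k → T ⊆ Y →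
      ((cubeAt c₀ Y).filter (fun v => r v ∩ Y = T)).card = 1 := by
  classical
  -- first, the cardinality of the "subset" filters
  have hNsub : ∀ T ⊆ Y, ((cubeAt c₀ Y).filter (fun v => r v ∩ Y ⊆ T)).card
      = T.powerset.card := by
    intro T hT
    set S := Y \ T with hS
    have hST : ∀ w, w ∈ S ↔ w ∈ Y ∧ w ∉ T := by intro w; simp [hS]
    apply Finset.card_bij (fun v _ => v ∩ T)
    · intro v hv
      rw [Finset.mem_powerset]
      exact Finset.inter_subset_right
    · -- injectivity
      intro v hv v' hv' heq
      rw [Finset.mem_filter] at hv hv'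
      obtain ⟨hvQ, hvr⟩ := hv
      obtain ⟨hv'Q, hv'r⟩ := hv'
      -- v' belongs to the S-face of v
      have hface : cubeAt v S ⊆ cubeAt c₀ Y := by
        rw [← cubeAt_eq_of_mem hvQ]
        exact cubeAt_mono (by intro w hw; exact ((hST w).1 hw).1)
      have hv'face : v' ∈ cubeAt v S := by
        rw [mem_cubeAt]
        ext w
        simp only [Finset.mem_sdiff]
        by_cases hwS : w ∈ S
        · simp [hwS]
        · simp only [hwS, not_false_iff, and_true]
          by_cases hwY : w ∈ Y
          · have hwT : w ∈ T := by
              by_contra hwT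
              exact hwS ((hST w).2 ⟨hwY, hwT⟩)
            have := Finset.ext_iff.1 heq w
            simp only [Finset.mem_inter, hwT, and_true] at this
            tauto
          · have h1 := Finset.ext_iff.1 (mem_cubeAt.1 hvQ) w
            have h2 := Finset.ext_iff.1 (mem_cubeAt.1 hv'Q) w
            simp only [Finset.mem_sdiff, hwY, not_false_iff, and_true] at h1 h2
            rw [h2, h1]
      obtain ⟨w₀, hw₀, hw₀u⟩ := hC2 (cubeAt v S) S (hface.trans hQ) (isCubeS_cubeAt v S)
      have hempty : ∀ u : Finset X, r u ∩ Y ⊆ T → r u ∩ S = ∅ := by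
        intro u hu
        ext w
        simp only [Finset.mem_inter, Finset.notMem_empty, iff_false]
        rintro ⟨hw1, hw2⟩
        have hwY := ((hST w).1 hw2).1
        have hwT := ((hST w).1 hw2).2
        exact hwT (hu (Finset.mem_inter.2 ⟨hw1, hwY⟩))
      have e1 : v = w₀ := hw₀u v ⟨self_mem_cubeAt v S, hempty v hvr⟩
      have e2 : v' = w₀ := hw₀u v' ⟨hv'face, hempty v' hv'r⟩
      rw [e1, e2]
    · -- surjectivity
      intro s hs
      rw [Finset.mem_powerset] at hs
      set S := Y \ T with hS
      set u₀ : Finset X := (c₀ \ T) ∪ s with hu₀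
      have hu₀Q : u₀ ∈ cubeAt c₀ Y := by
        rw [mem_cubeAt]
        ext w
        simp only [hu₀, Finset.mem_sdiff, Finset.mem_union]
        have h1 : w ∈ s → w ∈ T := fun h => hs h
        have h2 : w ∈ T → w ∈ Y := fun h => hT h
        tauto
      have hface : cubeAt u₀ S ⊆ cubeAt c₀ Y := by
        rw [← cubeAt_eq_of_mem hu₀Q]
        exact cubeAt_mono (by intro w hw; exact (Finset.mem_sdiff.1 hw).1)
      obtain ⟨w₀, ⟨hw₀f, hw₀r⟩, _⟩ := hC2 (cubeAt u₀ S) S (hface.trans hQ)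
        (isCubeS_cubeAt u₀ S)
      refine ⟨w₀, Finset.mem_filter.2 ⟨hface hw₀f, ?_⟩, ?_⟩
      · -- r w₀ ∩ Y ⊆ T
        intro w hw
        have hw1 := Finset.mem_inter.1 hw
        by_contra hwT
        have hwS : w ∈ S := Finset.mem_sdiff.2 ⟨hw1.2, hwT⟩
        have : w ∈ r w₀ ∩ S := Finset.mem_inter.2 ⟨hw1.1, hwS⟩
        rw [hw₀r] at this
        exact Finset.notMem_empty w this
      · -- w₀ ∩ T = s
        have hagree : w₀ \ S = u₀ \ S := mem_cubeAt.1 hw₀f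
        ext w
        simp only [Finset.mem_inter]
        constructor
        · rintro ⟨hw1, hw2⟩
          have hwS : w ∉ S := by
            intro hwS
            exact (Finset.mem_sdiff.1 hwS).2 hw2
          have := Finset.ext_iff.1 hagree w
          simp only [Finset.mem_sdiff, hwS, not_false_iff, and_true] at this
          have hwu : w ∈ u₀ := this.1 hw1
          rcases Finset.mem_union.1 hwu with h | h
          · exact absurd hw2 (Finset.mem_sdiff.1 h).2
          · exact h
        · intro hws
          have hwT : w ∈ T := hs hws
          have hwS : w ∉ S := by
            intro hwS
            exact (Finset.mem_sdiff.1 hwS).2 hwT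
          have := Finset.ext_iff.1 hagree w
          simp only [Finset.mem_sdiff, hwS, not_false_iff, and_true] at this
          exact ⟨this.2 (Finset.mem_union.2 (Or.inr hws)), hwT⟩
  -- now the induction
  intro k
  induction k with
  | zero =>
    intro T hTcard hT
    have hTe : T = ∅ := Finset.card_eq_zero.1 (Nat.le_zero.1 hTcard)
    subst hTe
    have h1 := hNsub ∅ (Finset.empty_subset Y)
    rw [Finset.powerset_empty, Finset.card_singleton] at h1
    have h2 : (cubeAt c₀ Y).filter (fun v => r v ∩ Y ⊆ ∅)
        = (cubeAt c₀ Y).filter (fun v => r v ∩ Y = ∅) := by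
      apply Finset.filter_congr
      intro v _
      simp only [Finset.subset_empty]
    rw [h2] at h1
    exact h1
  | succ k ihk =>
    intro T hTcard hT
    have hsum : ∑ T' ∈ T.powerset, ((cubeAt c₀ Y).filter (fun v => r v ∩ Y = T')).card
        = T.powerset.card := by
      rw [← hNsub T hT]
      rw [Finset.card_eq_sum_card_fiberwise (f := fun v => r v ∩ Y)
        (t := T.powerset) (fun v hv => Finset.mem_powerset.2 (Finset.mem_filter.1 hv).2)]
      apply Finset.sum_congr rfl
      intro T' hT'
      congr 1
      rw [Finset.filter_filter]
      apply Finset.filter_congr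
      intro v _
      rw [Finset.mem_powerset] at hT'
      constructor
      · intro h
        refine ⟨?_, h⟩
        show r v ∩ Y ⊆ T
        rw [h]; exact hT'
      · rintro ⟨h1, h2⟩
        exact h2
    have hTmem : T ∈ T.powerset := Finset.mem_powerset.2 (Finset.Subset.refl T)
    rw [← Finset.sum_erase_add _ _ hTmem] at hsum
    have hrest : ∀ T' ∈ T.powerset.erase T,
        ((cubeAt c₀ Y).filter (fun v => r v ∩ Y = T')).card = 1 := by
      intro T' hT'
      have h1 := Finset.mem_erase.1 hT'
      have h2 : T' ⊆ T := Finset.mem_powerset.1 h1.2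
      have h3 : T' ⊂ T := Finset.ssubset_iff_subset_ne.2 ⟨h2, h1.1⟩
      have h4 : T'.card < T.card := Finset.card_lt_card h3
      exact ihk T' (by omega) (h2.trans hT)
    rw [Finset.sum_congr rfl hrest] at hsum
    rw [Finset.sum_const, smul_eq_mul, mul_one] at hsum
    have hce : (T.powerset.erase T).card = T.powerset.card - 1 :=
      Finset.card_erase_of_mem hTmem
    have hppos : 0 < T.powerset.card := Finset.card_pos.2 ⟨T, hTmem⟩
    omega


/-! ### backward direction: (C1)+(C2)+acyclic implies dismantlable -/

section Backward

variable {r : Finset X → Finset X}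

/-- the orientation relation -/
def Rel (C : Finset (Finset X)) (r : Finset X → Finset X) (a b : Finset X) : Prop :=
  a ∈ C ∧ b ∈ C ∧ hdist a b = 1 ∧ (a \ b) ∪ (b \ a) ⊆ r a

lemma rel_def {C : Finset (Finset X)} {a b : Finset X} :
    Rel C r a b ↔ (a ∈ C ∧ b ∈ C ∧ hdist a b = 1 ∧ sd a b ⊆ r a) := Iff.rfl

lemma exists_source {C : Finset (Finset X)} (hne : C.Nonempty)
    (hacyc : ∀ c, ¬ Relation.TransGen (Rel C r) c c) :
    ∃ c ∈ C, ∀ b, ¬ Rel C r b c := by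
  classical
  by_contra h
  push_neg at h
  have hstep : ∀ c : {c // c ∈ C}, ∃ b : {c // c ∈ C}, Rel C r b.1 c.1 := by
    intro c
    obtain ⟨b, hb⟩ := h c.1 c.2
    exact ⟨⟨b, hb.1⟩, hb⟩
  let f : ℕ → {c // c ∈ C} := fun n =>
    Nat.rec ⟨hne.choose, hne.choose_spec⟩ (fun _ p => (hstep p).choose) n
  have hf : ∀ n, Rel C r (f (n + 1)).1 (f n).1 := by
    intro n
    exact (hstep (f n)).choose_spec
  have hchain : ∀ i k, Relation.TransGen (Rel C r) (f (i + k + 1)).1 (f i).1 := by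
    intro i k
    induction k with
    | zero => exact Relation.TransGen.single (hf i)
    | succ k ihk =>
      have : Relation.TransGen (Rel C r) (f (i + k + 2)).1 (f (i + k + 1)).1 :=
        Relation.TransGen.single (hf (i + k + 1))
      have h2 : i + (k+1) + 1 = i + k + 2 := by omega
      rw [h2]
      exact Relation.TransGen.trans this ihk
  obtain ⟨i, j, hij, hfij⟩ := Finite.exists_ne_map_eq_of_infinite f
  rcases Nat.lt_or_ge i j with h' | h'
  · obtain ⟨k, rfl⟩ : ∃ k, j = i + k + 1 := ⟨j - i - 1, by omega⟩
    have := hchain i k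
    rw [hfij] at this
    exact hacyc _ this
  · have h'' : j < i := by
      rcases Nat.lt_or_ge j i with h'' | h''
      · exact h''
      · exact lt_of_le_of_ne h' (Ne.symm hij)
    obtain ⟨k, rfl⟩ : ∃ k, i = j + k + 1 := ⟨i - j - 1, by omega⟩
    have := hchain j k
    rw [← hfij] at this
    exact hacyc _ this

/-- any cube of `C` containing a source `c` is contained in `cubeAt c (r c)` -/
lemma cube_subset_source {C : Finset (Finset X)} (hC2 : CondC2 C r)
    {c : Finset X} (hc : c ∈ C) (hsrc : ∀ b, ¬ Rel C r b c)
    {Q : Finset (Finset X)} (hQ : IsCubeOf C Q) (hcQ : c ∈ Q) :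
    ∃ Yq, Q = cubeAt c Yq ∧ Yq ⊆ r c := by
  obtain ⟨Yq, hYq⟩ := hQ.2
  refine ⟨Yq, isCubeS_eq_cubeAt hYq hcQ, ?_⟩
  intro x hx
  set b := sd c {x} with hbdef
  have hbQ : b ∈ Q := by
    rw [isCubeS_eq_cubeAt hYq hcQ]
    exact sd_mem_cubeAt (self_mem_cubeAt c Yq) (Finset.singleton_subset_iff.2 hx)
  have hbC : b ∈ C := hQ.1 hbQ
  have hcb : sd c b = {x} := by rw [hbdef, sd_sd_cancel]
  by_contra hxrc
  have hxrb : x ∈ r b := by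
    have := edge_orient hC2 hc hbC hcb
    tauto
  apply hsrc b
  rw [rel_def]
  refine ⟨hbC, hc, ?_, ?_⟩
  · rw [hdist_eq, sd_comm, hcb, Finset.card_singleton]
  · show sd b c ⊆ r b
    rw [sd_comm, hcb]
    exact Finset.singleton_subset_iff.2 hxrb

lemma corner_of_source {C : Finset (Finset X)} (hC1 : CondC1 C r) (hC2 : CondC2 C r)
    {c : Finset X} (hc : c ∈ C) (hsrc : ∀ b, ¬ Rel C r b c) :
    IsCornerOf C c := by
  have hBsub : cubeAt c (r c) ⊆ C := hC1 c hc
  have hBcube : IsCubeOf C (cubeAt c (r c)) := ⟨hBsub, r c, isCubeS_cubeAt c (r c)⟩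
  have hsub : ∀ Q, IsCubeOf C Q → c ∈ Q → Q ⊆ cubeAt c (r c) := by
    intro Q hQ hcQ
    obtain ⟨Yq, hQeq, hYsub⟩ := cube_subset_source hC2 hc hsrc hQ hcQ
    rw [hQeq]
    exact cubeAt_mono hYsub
  refine ⟨hc, cubeAt c (r c), ⟨⟨hBcube, ?_⟩, self_mem_cubeAt c (r c)⟩, ?_⟩
  · intro B' hB' hsubB'
    have hcB' : c ∈ B' := hsubB' (self_mem_cubeAt c (r c))
    exact Finset.Subset.antisymm hsubB' (hsub B' hB' hcB')
  · rintro B' ⟨hB'max, hcB'⟩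
    have h1 : B' ⊆ cubeAt c (r c) := hsub B' hB'max.1 hcB'
    exact hB'max.2 _ hBcube h1

lemma backward_aux (r : Finset X → Finset X) : ∀ n, ∀ C : Finset (Finset X), C.card ≤ n →
    CondC1 C r → CondC2 C r → (∀ c, ¬ Relation.TransGen (Rel C r) c c) →
    Dismantlable C := by
  intro n
  induction n with
  | zero =>
    intro C hcard _ _ _
    have : C = ∅ := Finset.card_eq_zero.1 (Nat.le_zero.1 hcard)
    subst this
    exact ⟨[], by simp, List.nodup_nil, fun i h => absurd h (by simp)⟩
  | succ n ih =>
    intro C hcard hC1 hC2 hacyc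
    rcases Finset.eq_empty_or_nonempty C with rfl | hne
    · exact ⟨[], by simp, List.nodup_nil, fun i h => absurd h (by simp)⟩
    obtain ⟨c, hc, hsrc⟩ := exists_source hne hacyc
    have hcorner : IsCornerOf C c := corner_of_source hC1 hC2 hc hsrc
    set C' := C.erase c with hC'
    -- C1 for C'
    have hC1' : CondC1 C' r := by
      intro c'' hc''
      have hc''C : c'' ∈ C := Finset.mem_of_mem_erase hc''
      have hsub : cubeAt c'' (r c'') ⊆ C := hC1 c'' hc''C
      intro d hd
      rw [hC', Finset.mem_erase]
      refine ⟨?_, hsub hd⟩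
      intro hdc
      rw [hdc] at hd
      -- c ∈ cubeAt c'' (r c'') : contradiction via counting
      have hcmem : c ∈ cubeAt c'' (r c'') := hd
      have hQcube : IsCubeOf C (cubeAt c'' (r c'')) :=
        ⟨hsub, r c'', isCubeS_cubeAt c'' (r c'')⟩
      obtain ⟨Yq, hQeq, hYsub⟩ := cube_subset_source hC2 hc hsrc hQcube hcmem
      -- supports: r c'' = Yq
      have hYeq : r c'' = Yq := by
        have h1 := isCubeS_cubeAt c'' (r c'')
        have h2 : IsCubeS (cubeAt c'' (r c'')) Yq := hQeq ▸ isCubeS_cubeAt c Yq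
        rw [← suppB_of_isCubeS h1, ← suppB_of_isCubeS h2]
      have hYrc : r c'' ⊆ r c := hYeq ▸ hYsub
      -- counting: exactly one vertex v of the cube with r v ∩ (r c'') = r c''
      have hcount := counting_lemma hC2 hsub (r c'').card (r c'') le_rfl
        (Finset.Subset.refl _)
      set F := (cubeAt c'' (r c'')).filter (fun v => r v ∩ (r c'') = r c'') with hF
      have hc''F : c'' ∈ F := Finset.mem_filter.2 ⟨self_mem_cubeAt c'' (r c''),
        Finset.inter_self (r c'')⟩
      have hcF : c ∈ F := Finset.mem_filter.2 ⟨hcmem,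
        Finset.inter_eq_right.2 hYrc⟩
      have hne'' : c'' ≠ c := by
        rintro rfl
        exact (Finset.mem_erase.1 hc'').1 rfl
      have : 1 < F.card := Finset.one_lt_card.2 ⟨c'', hc''F, c, hcF, hne''⟩
      omega
    have hC2' : CondC2 C' r := by
      intro B Y hB hY
      exact hC2 B Y (hB.trans (Finset.erase_subset c C)) hY
    have hacyc' : ∀ c', ¬ Relation.TransGen (Rel C' r) c' c' := by
      intro c' hc'
      apply hacyc c'
      apply Relation.TransGen.mono _ _ _ hc'
      intro a b hab
      obtain ⟨h1, h2, h3, h4⟩ := hab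
      exact ⟨Finset.mem_of_mem_erase h1, Finset.mem_of_mem_erase h2, h3, h4⟩
    have hcard' : C'.card ≤ n := by
      rw [hC', Finset.card_erase_of_mem hc]
      have : 1 ≤ C.card := Finset.card_pos.2 hne
      omega
    obtain ⟨l', hl'C, hl'nodup, hl'corner⟩ := ih C' hcard' hC1' hC2' hacyc'
    refine ⟨l' ++ [c], ?_, ?_, ?_⟩
    · rw [List.toFinset_append, hl'C]
      simp only [List.toFinset_cons, List.toFinset_nil, LawfulSingleton.insert_empty_eq]
      rw [Finset.union_comm, ← Finset.insert_eq, hC', Finset.insert_erase hc]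
    · rw [List.nodup_append]
      refine ⟨hl'nodup, List.nodup_singleton c, ?_⟩
      intro a ha b hac
      rw [List.mem_singleton] at hac
      subst hac
      have : a ∈ C' := by rw [← hl'C]; exact List.mem_toFinset.2 ha
      exact (Finset.mem_erase.1 this).1
    · intro i h
      rw [List.length_append, List.length_singleton] at h
      rcases Nat.lt_or_ge i l'.length with hi | hi
      · have hget : (l' ++ [c]).get ⟨i, by rw [List.length_append]; omega⟩
            = l'.get ⟨i, hi⟩ := by
          simp only [List.get_eq_getElem]; exact List.getElem_append_left hi
        have htake : (l' ++ [c]).take (i + 1) = l'.take (i + 1) :=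
          List.take_append_of_le_length (by omega)
        rw [hget, htake]
        exact hl'corner i hi
      · have hieq : i = l'.length := by omega
        subst hieq
        have htake : (l' ++ [c]).take (l'.length + 1) = l' ++ [c] := by
          apply List.take_of_length_le
          rw [List.length_append, List.length_singleton]
        have hget : (l' ++ [c]).get ⟨l'.length, by
            rw [List.length_append, List.length_singleton]; omega⟩ = c := by
          rw [List.get_eq_getElem]
          exact List.getElem_concat_length rfl _
        rw [htake, hget]
        have : (l' ++ [c]).toFinset = C := by
          rw [List.toFinset_append, hl'C]
          simp only [List.toFinset_cons, List.toFinset_nil, LawfulSingleton.insert_empty_eq]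
          rw [Finset.union_comm, ← Finset.insert_eq, hC', Finset.insert_erase hc]
        rw [this]
        exact hcorner

end Backward


/-! ### forward direction: dismantlable implies (C1)+(C2)+acyclic -/

section Forward

lemma mem_take_indexOf {α : Type*} [DecidableEq α] :
    ∀ (l : List α) (n : ℕ) (a : α), a ∈ l.take n → l.idxOf a < n := by
  intro l
  induction l with
  | nil => intro n a ha; simp at ha
  | cons x xs ih =>
    intro n a ha
    cases n with
    | zero => simp at ha
    | succ n =>
      rw [List.take_succ_cons] at ha
      by_cases hax : a = x
      · subst hax; rw [List.idxOf_cons_self]; omega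
      · rcases List.mem_cons.1 ha with h | h
        · exact absurd h hax
        · rw [List.idxOf_cons_ne _ (fun hh => hax hh.symm)]
          have := ih n a h
          omega

lemma indexOf_mem_take {α : Type*} [DecidableEq α] {l : List α} {n : ℕ} {a : α}
    (ha : a ∈ l) (h : l.idxOf a < n) : a ∈ l.take n := by
  have hlt : l.idxOf a < l.length := List.idxOf_lt_length_iff.2 ha
  have hlen : l.idxOf a < (l.take n).length := by
    rw [List.length_take]; omega
  have hgl : l[l.idxOf a] = a := by
    simpa using List.idxOf_get hlt
  have hgt : (l.take n)[l.idxOf a] = a := by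
    rw [List.getElem_take]
    exact hgl
  exact hgt ▸ List.getElem_mem hlen

lemma indexOf_inj {α : Type*} [DecidableEq α] {l : List α} (hnd : l.Nodup) {a b : α}
    (ha : a ∈ l) (hb : b ∈ l) (h : l.idxOf a = l.idxOf b) : a = b := by
  have h1 := List.idxOf_get (List.idxOf_lt_length_iff.2 ha)
  have h2 := List.idxOf_get (List.idxOf_lt_length_iff.2 hb)
  rw [← h1, ← h2]
  exact congrArg l.get (Fin.ext h)

lemma take_succ_toFinset {α : Type*} [DecidableEq α] (l : List α) (k : ℕ)
    (hk : k < l.length) :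
    (l.take (k+1)).toFinset = insert (l.get ⟨k, hk⟩) (l.take k).toFinset := by
  rw [List.take_succ]
  have h1 : l[k]? = some l[k] := List.getElem?_eq_getElem hk
  rw [h1]
  rw [List.toFinset_append]
  simp only [Option.toList_some, List.toFinset_cons, List.toFinset_nil,
    LawfulSingleton.insert_empty_eq]
  rw [Finset.union_comm, ← Finset.insert_eq, List.get_eq_getElem]

lemma take_erase {α : Type*} [DecidableEq α] {l : List α} (hnd : l.Nodup) (k : ℕ)
    (hk : k < l.length) :
    ((l.take (k+1)).toFinset).erase (l.get ⟨k, hk⟩) = (l.take k).toFinset := by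
  rw [take_succ_toFinset l k hk]
  apply Finset.erase_insert
  intro hmem
  rw [List.mem_toFinset] at hmem
  have h1 := mem_take_indexOf l k _ hmem
  have hmeml : l.get ⟨k, hk⟩ ∈ l := by
    rw [List.get_eq_getElem]; exact List.getElem_mem hk
  have h3 := List.idxOf_get (List.idxOf_lt_length_iff.2 hmeml)
  have h4 : (⟨l.idxOf (l.get ⟨k, hk⟩), List.idxOf_lt_length_iff.2 hmeml⟩ : Fin l.length)
      = ⟨k, hk⟩ := (hnd.get_inj_iff).1 h3
  have h5 : l.idxOf (l.get ⟨k, hk⟩) = k := congrArg Fin.val h4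
  omega

lemma forward {C : Finset (Finset X)} (hC : IsAmple C) (hd : Dismantlable C) :
    ∃ r : Finset X → Finset X, CondC1 C r ∧ CondC2 C r ∧
      ∀ c : Finset X, ¬ Relation.TransGen
        (fun a b => a ∈ C ∧ b ∈ C ∧ hdist a b = 1 ∧ (a \ b) ∪ (b \ a) ⊆ r a) c c := by
  classical
  obtain ⟨l, hlC, hnd, hcorner⟩ := hd
  have hcornerAt : ∀ c (h : c ∈ l),
      IsCornerOf ((l.take (l.idxOf c + 1)).toFinset) c := by
    intro c h
    have hi : l.idxOf c < l.length := List.idxOf_lt_length_iff.2 h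
    have h2 := hcorner (l.idxOf c) hi
    rwa [List.idxOf_get hi] at h2
  set r : Finset X → Finset X := fun c =>
    if h : c ∈ l then suppB ((hcornerAt c h).2).choose else ∅ with hrdef
  have hmaster : ∀ c (h : c ∈ l),
      cubeAt c (r c) ⊆ (l.take (l.idxOf c + 1)).toFinset ∧
      (∀ Q, IsCubeOf ((l.take (l.idxOf c + 1)).toFinset) Q → c ∈ Q →
        Q ⊆ cubeAt c (r c)) := by
    intro c h
    have hspec := ((hcornerAt c h).2).choose_spec
    obtain ⟨⟨hBmax, hcB⟩, huniq⟩ := hspec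
    obtain ⟨Y, hY⟩ := hBmax.1.2
    have hrc : r c = Y := by
      rw [hrdef]
      simp only [dif_pos h]
      exact suppB_of_isCubeS hY
    have hBeq : ((hcornerAt c h).2).choose = cubeAt c Y := isCubeS_eq_cubeAt hY hcB
    constructor
    · rw [hrc, ← hBeq]; exact hBmax.1.1
    · intro Q hQ hcQ
      have hres := cube_subset_of_corner ⟨hBmax, hcB⟩ (fun B' hB' => huniq B' hB') hQ hcQ
      rw [hrc, ← hBeq]; exact hres
  have hkey : ∀ c (h : c ∈ l) (x : X),
      x ∈ r c ↔ sd c {x} ∈ (l.take (l.idxOf c + 1)).toFinset := by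
    intro c h x
    obtain ⟨h1, h2⟩ := hmaster c h
    constructor
    · intro hx
      apply h1
      exact sd_mem_cubeAt (self_mem_cubeAt c (r c)) (Finset.singleton_subset_iff.2 hx)
    · intro hx
      have hcK : c ∈ (l.take (l.idxOf c + 1)).toFinset := (hcornerAt c h).1
      have hcube : IsCubeOf ((l.take (l.idxOf c + 1)).toFinset) (cubeAt c {x}) :=
        ⟨cubeAt_singleton_sub hcK hx, {x}, isCubeS_cubeAt c {x}⟩
      have hsub := h2 _ hcube (self_mem_cubeAt c {x})
      exact Finset.singleton_subset_iff.1 (subset_of_cubeAt_subset hsub)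
  have hmemlC : ∀ c, c ∈ C → c ∈ l := by
    intro c hc
    apply List.mem_toFinset.1
    rw [hlC]; exact hc
  have horder : ∀ a b, a ∈ l → b ∈ l → ∀ x, sd a b = {x} →
      (x ∈ r a ↔ l.idxOf b < l.idxOf a) := by
    intro a b ha hb x hab
    have hba : b = sd a {x} := by rw [← hab, sd_sd_cancel]
    have hne : a ≠ b := by
      intro h
      rw [sd_eq_empty_iff.2 h] at hab
      have := Finset.ext_iff.1 hab x
      simp at this
    rw [hkey a ha x, ← hba]
    constructor
    · intro h
      have h2 := mem_take_indexOf l _ b (List.mem_toFinset.1 h)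
      have hne' : l.idxOf b ≠ l.idxOf a :=
        fun hh => hne (indexOf_inj hnd ha hb hh.symm)
      omega
    · intro h
      exact List.mem_toFinset.2 (indexOf_mem_take hb (by omega))
  have hampletake : ∀ d k, k + d = l.length → IsAmple ((l.take k).toFinset) := by
    intro d
    induction d with
    | zero =>
      intro k hk
      have hkl : k = l.length := by omega
      subst hkl
      rw [List.take_of_length_le (le_refl _), hlC]
      exact hC
    | succ d ihd =>
      intro k hk
      have hklt : k < l.length := by omega
      have h1 := ihd (k+1) (by omega)
      have h2 := hcorner k hklt
      have h3 := ample_erase_corner h1 h2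
      rwa [take_erase hnd k hklt] at h3
  refine ⟨r, ?_, ?_, ?_⟩
  · -- C1
    intro c hcC
    have hcl : c ∈ l := hmemlC c hcC
    refine (hmaster c hcl).1.trans ?_
    intro d hd
    rw [← hlC]
    exact List.mem_toFinset.2 (List.take_subset _ _ (List.mem_toFinset.1 hd))
  · -- C2
    intro B Y hBsub hBY
    have hBne : B.Nonempty := by
      obtain ⟨t, _, rfl⟩ := hBY
      exact ⟨t ∪ ∅, Finset.mem_image.2 ⟨∅, by simp, rfl⟩⟩
    obtain ⟨v, hvB, hvmin⟩ := Finset.exists_min_image B l.idxOf hBne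
    have hmeml : ∀ w ∈ B, w ∈ l := fun w hw => hmemlC w (hBsub hw)
    have hclaim : ∀ v', v' ∈ B → r v' ∩ Y = ∅ → ∀ u ∈ B, l.idxOf v' ≤ l.idxOf u := by
      intro v' hv' hrv' u hu
      by_contra hlt
      push_neg at hlt
      have hv'l : v' ∈ l := hmeml v' hv'
      have hul : u ∈ l := hmeml u hu
      have huv : u ≠ v' := by
        intro h
        rw [h] at hlt
        omega
      have hKample : IsAmple ((l.take (l.idxOf v' + 1)).toFinset) := by
        apply hampletake (l.length - (l.idxOf v' + 1)) (l.idxOf v' + 1)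
        have := List.idxOf_lt_length_iff.2 hv'l
        omega
      have hv'K : v' ∈ (l.take (l.idxOf v' + 1)).toFinset :=
        List.mem_toFinset.2 (indexOf_mem_take hv'l (by omega))
      have huK : u ∈ (l.take (l.idxOf v' + 1)).toFinset :=
        List.mem_toFinset.2 (indexOf_mem_take hul (by omega))
      obtain ⟨y, hy, hvy⟩ := neighbor_toward hKample huK hv'K huv
      have hyY : y ∈ Y := by
        have hBv : B = cubeAt v' Y := isCubeS_eq_cubeAt hBY hv'
        have hsd : sd u v' ⊆ Y :=
          sd_subset_of_mem_cubeAt (hBv ▸ hu) (hBv ▸ hv')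
        exact hsd hy
      have hyr : y ∈ r v' := (hkey v' hv'l y).2 hvy
      have hmem2 : y ∈ r v' ∩ Y := Finset.mem_inter.2 ⟨hyr, hyY⟩
      rw [hrv'] at hmem2
      exact Finset.notMem_empty y hmem2
    have hvl : v ∈ l := hmeml v hvB
    have hvsink : r v ∩ Y = ∅ := by
      by_contra hne2
      obtain ⟨x, hx⟩ := Finset.nonempty_iff_ne_empty.2 hne2
      have hx1 := Finset.mem_inter.1 hx
      have hnb : sd v {x} ∈ (l.take (l.idxOf v + 1)).toFinset := (hkey v hvl x).1 hx1.1
      have hnbB : sd v {x} ∈ B := by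
        have hBv : B = cubeAt v Y := isCubeS_eq_cubeAt hBY hvB
        rw [hBv]
        exact sd_mem_cubeAt (self_mem_cubeAt v Y) (Finset.singleton_subset_iff.2 hx1.2)
      have h5 := mem_take_indexOf l _ _ (List.mem_toFinset.1 hnb)
      have h6 := hvmin _ hnbB
      have h7 : sd v {x} ≠ v := sd_singleton_ne v x
      have h8 : l.idxOf (sd v {x}) ≠ l.idxOf v :=
        fun hh => h7 (indexOf_inj hnd (hmeml _ hnbB) hvl hh)
      omega
    refine ⟨v, ⟨hvB, hvsink⟩, ?_⟩
    rintro v' ⟨hv'B, hv'sink⟩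
    have h1 := hclaim v' hv'B hv'sink v hvB
    have h2 := hvmin v' hv'B
    exact indexOf_inj hnd (hmeml _ hv'B) hvl (by omega)
  · -- acyclicity
    intro c htg
    have hrel : ∀ a b, (a ∈ C ∧ b ∈ C ∧ hdist a b = 1 ∧ (a \ b) ∪ (b \ a) ⊆ r a) →
        l.idxOf b < l.idxOf a := by
      rintro a b ⟨haC, hbC, hdist1, hsub⟩
      have ha := hmemlC a haC
      have hb := hmemlC b hbC
      have hcard1 : (sd a b).card = 1 := hdist1
      obtain ⟨x, hx⟩ := Finset.card_eq_one.1 hcard1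
      have hxra : x ∈ r a := by
        have hsub' : sd a b ⊆ r a := hsub
        rw [hx] at hsub'
        exact Finset.singleton_subset_iff.1 hsub'
      exact (horder a b ha hb x hx).1 hxra
    have hlt : ∀ a b, Relation.TransGen
        (fun a b => a ∈ C ∧ b ∈ C ∧ hdist a b = 1 ∧ (a \ b) ∪ (b \ a) ⊆ r a) a b →
        l.idxOf b < l.idxOf a := by
      intro a b h
      induction h with
      | single h' => exact hrel _ _ h'
      | tail h1 h2 ih =>
        have := hrel _ _ h2
        omega
    exact absurd (hlt c c htg) (lt_irrefl _)

end Forward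

end Stmt18Aux

/-- An ample class admits a corner peeling if and only if there is a map
`r` satisfying (C1) and (C2) whose induced orientation of the one-inclusion graph
(directing the `x`-edge `c c'` from `c` to `c'` iff `x ∈ r c`) is acyclic. -/
theorem stmt_18 (C : Finset (Finset X)) (hC : IsAmple C) :
    Dismantlable C ↔
      ∃ r : Finset X → Finset X, CondC1 C r ∧ CondC2 C r ∧
        ∀ c : Finset X, ¬ Relation.TransGen
          (fun a b => a ∈ C ∧ b ∈ C ∧ hdist a b = 1 ∧ (a \ b) ∪ (b \ a) ⊆ r a) c c := by
  constructor
  · intro hd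
    exact Stmt18Aux.forward hC hd
  · rintro ⟨r, h1, h2, h3⟩
    exact Stmt18Aux.backward_aux r C.card C le_rfl h1 h2 h3
end

section
/- For every ample concept class C over X there exist: (a) a bijection r' : C → X(C) satisfying condition (C1), i.e., for every c ∈ C the cube of 2^X with support r'(c) containing c is a cube of C; and (b) an injection r'' : C → 2^X satisfying condition (C2), i.e., for every cube B of C there is a unique c ∈ B with r''(c) ∩ supp(B) = ∅. -/
variable {X : Type} [Fintype X] [DecidableEq X]

set_option linter.unusedSectionVars false


lemma mem_shatteredSets' {C : Finset (Finset X)} {Y : Finset X} :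
    Y ∈ shatteredSets C ↔ Shatters C Y := by
  simp [shatteredSets]

lemma shatters_exists_superset {C : Finset (Finset X)} {Y : Finset X} (h : Shatters C Y) :
    ∃ c ∈ C, Y ⊆ c := by
  obtain ⟨c, hc, hcY⟩ := h Y (Finset.mem_powerset_self Y)
  refine ⟨c, hc, fun a ha => ?_⟩
  rw [← hcY] at ha
  exact (Finset.mem_inter.1 ha).1

lemma not_mem_of_shatters {C : Finset (Finset X)} {Y : Finset X} {x : X}
    (hC : ∀ c ∈ C, x ∉ c) (h : Shatters C Y) : x ∉ Y := by
  intro hxY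
  obtain ⟨c, hc, hYc⟩ := shatters_exists_superset h
  exact hC c hc (hYc hxY)

lemma erase_inter_of_not_mem' {Y c : Finset X} {x : X} (h : x ∉ Y) :
    (c.erase x) ∩ Y = c ∩ Y := by
  ext a
  simp only [Finset.mem_inter, Finset.mem_erase]
  constructor
  · rintro ⟨⟨-, h1⟩, h2⟩; exact ⟨h1, h2⟩
  · rintro ⟨h1, h2⟩; exact ⟨⟨fun he => h (he ▸ h2), h1⟩, h2⟩

lemma shatteredSets_restrictX (D : Finset (Finset X)) (x : X) :
    shatteredSets (restrictX D x) = (shatteredSets D).filter (fun Y => x ∉ Y) := by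
  ext Y
  simp only [mem_shatteredSets', Finset.mem_filter, mem_shatteredSets']
  constructor
  · intro h
    have hxY : x ∉ Y := by
      refine not_mem_of_shatters (fun c hc => ?_) h
      simp only [restrictX, Finset.mem_image] at hc
      obtain ⟨d, -, rfl⟩ := hc
      exact Finset.notMem_erase _ _
    refine ⟨?_, hxY⟩
    intro s hs
    obtain ⟨c, hc, hcs⟩ := h s hs
    simp only [restrictX, Finset.mem_image] at hc
    obtain ⟨d, hd, rfl⟩ := hc
    exact ⟨d, hd, by rw [← erase_inter_of_not_mem' hxY]; exact hcs⟩
  · rintro ⟨h, hxY⟩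
    intro s hs
    obtain ⟨c, hc, hcs⟩ := h s hs
    refine ⟨c.erase x, ?_, ?_⟩
    · exact Finset.mem_image_of_mem _ hc
    · rw [erase_inter_of_not_mem' hxY]; exact hcs

lemma inter_insert_of_not_mem' {c Y : Finset X} {x : X} (h : x ∉ c) :
    c ∩ insert x Y = c ∩ Y := by
  ext a
  simp only [Finset.mem_inter, Finset.mem_insert]
  constructor
  · rintro ⟨h1, h2 | h2⟩
    · exact absurd (h2 ▸ h1) h
    · exact ⟨h1, h2⟩
  · rintro ⟨h1, h2⟩; exact ⟨h1, Or.inr h2⟩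

lemma insert_inter_insert' {c Y : Finset X} {x : X} :
    (insert x c) ∩ (insert x Y) = insert x (c ∩ Y) := by
  ext a
  simp only [Finset.mem_inter, Finset.mem_insert]
  tauto

lemma reduction_not_mem {D : Finset (Finset X)} {x : X} {c : Finset X}
    (h : c ∈ reduction D x) : c ∈ D ∧ x ∉ c ∧ insert x c ∈ D := by
  simpa [reduction] using h

lemma shattered_reduction_insert {D : Finset (Finset X)} {x : X} {Y : Finset X}
    (hY : Y ∈ shatteredSets (reduction D x)) :
    x ∉ Y ∧ insert x Y ∈ shatteredSets D := by
  rw [mem_shatteredSets'] at hY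
  have hxY : x ∉ Y :=
    not_mem_of_shatters (fun c hc => (reduction_not_mem hc).2.1) hY
  refine ⟨hxY, mem_shatteredSets'.2 ?_⟩
  intro s hs
  rw [Finset.mem_powerset] at hs
  have hs' : s.erase x ∈ Y.powerset := by
    rw [Finset.mem_powerset]
    intro a ha
    have h1 := Finset.mem_of_mem_erase ha
    have h2 := Finset.ne_of_mem_erase ha
    rcases Finset.mem_insert.1 (hs h1) with h | h
    · exact absurd h h2
    · exact h
  obtain ⟨c, hc, hcY⟩ := hY _ hs'
  obtain ⟨hcD, hxc, hic⟩ := reduction_not_mem hc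
  by_cases hxs : x ∈ s
  · refine ⟨insert x c, hic, ?_⟩
    rw [insert_inter_insert', hcY, Finset.insert_erase hxs]
  · refine ⟨c, hcD, ?_⟩
    rw [inter_insert_of_not_mem' hxc, hcY, Finset.erase_eq_of_notMem hxs]

lemma card_restrictX_add_card_reduction (D : Finset (Finset X)) (x : X) :
    (restrictX D x).card + (reduction D x).card = D.card := by
  classical
  set D0 := D.filter (fun c => x ∉ c) with hD0
  set D1 := D.filter (fun c => x ∈ c) with hD1
  set E := D1.image (·.erase x) with hE
  have hsplit : restrictX D x = D0 ∪ E := by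
    ext c
    simp only [restrictX, Finset.mem_image, Finset.mem_union, hD0, hD1, hE,
      Finset.mem_filter]
    constructor
    · rintro ⟨d, hd, rfl⟩
      by_cases hxd : x ∈ d
      · exact Or.inr ⟨d, ⟨hd, hxd⟩, rfl⟩
      · exact Or.inl ⟨by rwa [Finset.erase_eq_of_notMem hxd], Finset.notMem_erase _ _⟩
    · rintro (⟨hc, hxc⟩ | ⟨d, ⟨hd, hxd⟩, rfl⟩)
      · exact ⟨c, hc, Finset.erase_eq_of_notMem hxc⟩
      · exact ⟨d, hd, rfl⟩
  have hinter : D0 ∩ E = reduction D x := by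
    ext c
    simp only [hD0, hD1, hE, Finset.mem_inter, Finset.mem_filter, Finset.mem_image,
      reduction]
    constructor
    · rintro ⟨⟨hc, hxc⟩, d, ⟨hd, hxd⟩, rfl⟩
      rw [Finset.insert_erase hxd]
      exact ⟨hc, hxc, hd⟩
    · rintro ⟨hc, hxc, hic⟩
      exact ⟨⟨hc, hxc⟩, insert x c, ⟨hic, Finset.mem_insert_self _ _⟩,
        by rw [Finset.erase_insert hxc]⟩
  have hEcard : E.card = D1.card := by
    apply Finset.card_image_of_injOn
    intro a ha b hb hab
    have hxa : x ∈ a := (Finset.mem_filter.1 ha).2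
    have hxb : x ∈ b := (Finset.mem_filter.1 hb).2
    simp only at hab
    rw [← Finset.insert_erase hxa, ← Finset.insert_erase hxb, hab]
  have hu := Finset.card_union_add_card_inter D0 E
  rw [hinter] at hu
  rw [hsplit]
  have hsplitD : D0.card + D1.card = D.card := by
    have h := Finset.card_filter_add_card_filter_not (s := D) (p := fun c => x ∉ c)
    simp only [not_not] at h
    exact h
  omega

/-- Strongly shattered sets: supports of cubes contained in `D`. -/
def strSets (D : Finset (Finset X)) : Finset (Finset X) :=
  Finset.univ.filter (fun Y => ∃ t : Finset X, t ∩ Y = ∅ ∧ ∀ s ∈ Y.powerset, t ∪ s ∈ D)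

lemma mem_strSets {D : Finset (Finset X)} {Y : Finset X} :
    Y ∈ strSets D ↔ ∃ t : Finset X, t ∩ Y = ∅ ∧ ∀ s ∈ Y.powerset, t ∪ s ∈ D := by
  simp [strSets]

lemma erase_union_of_not_mem {t s : Finset X} {x : X} (h : x ∉ s) :
    (t ∪ s).erase x = t.erase x ∪ s := by
  ext a
  simp only [Finset.mem_erase, Finset.mem_union]
  constructor
  · rintro ⟨hne, h1 | h1⟩
    · exact Or.inl ⟨hne, h1⟩
    · exact Or.inr h1
  · rintro (⟨hne, h1⟩ | h1)
    · exact ⟨hne, Or.inl h1⟩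
    · exact ⟨fun he => h (he ▸ h1), Or.inr h1⟩

lemma strSets_restrictX {D : Finset (Finset X)} {x : X} {Y : Finset X}
    (hx : x ∉ Y) (h : Y ∈ strSets D) : Y ∈ strSets (restrictX D x) := by
  obtain ⟨t, ht, hcube⟩ := mem_strSets.1 h
  refine mem_strSets.2 ⟨t.erase x, ?_, ?_⟩
  · rw [erase_inter_of_not_mem' hx, ht]
  · intro s hs
    have hxs : x ∉ s := fun hxs => hx (Finset.mem_powerset.1 hs hxs)
    rw [← erase_union_of_not_mem hxs]
    exact Finset.mem_image_of_mem _ (hcube s hs)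

lemma strSets_reduction {D : Finset (Finset X)} {x : X} {Y : Finset X}
    (hx : x ∈ Y) (h : Y ∈ strSets D) : Y.erase x ∈ strSets (reduction D x) := by
  obtain ⟨t, ht, hcube⟩ := mem_strSets.1 h
  have hxt : x ∉ t := fun hxt => by
    have : x ∈ t ∩ Y := Finset.mem_inter.2 ⟨hxt, hx⟩
    rw [ht] at this; exact absurd this (Finset.notMem_empty x)
  refine mem_strSets.2 ⟨t, ?_, ?_⟩
  · rw [Finset.eq_empty_iff_forall_notMem]
    intro a ha
    have : a ∈ t ∩ Y := Finset.mem_inter.2 ⟨(Finset.mem_inter.1 ha).1,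
      Finset.mem_of_mem_erase (Finset.mem_inter.1 ha).2⟩
    rw [ht] at this
    exact absurd this (Finset.notMem_empty a)
  · intro s hs
    rw [Finset.mem_powerset] at hs
    have hsY : s ⊆ Y := hs.trans (Finset.erase_subset _ _)
    have hxs : x ∉ s := fun hxs => Finset.notMem_erase x Y (hs hxs)
    simp only [reduction, Finset.mem_filter]
    refine ⟨hcube s (Finset.mem_powerset.2 hsY), ?_, ?_⟩
    · simp only [Finset.mem_union]; rintro (h1 | h1); exacts [hxt h1, hxs h1]
    · have : insert x (t ∪ s) = t ∪ insert x s := by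
        ext a; simp only [Finset.mem_insert, Finset.mem_union]; tauto
      rw [this]
      exact hcube _ (Finset.mem_powerset.2 (Finset.insert_subset hx hsY))

lemma sum_image_le_nat {α β : Type*} [DecidableEq β] (s : Finset α) (f : α → β) (g : β → ℕ) :
    (s.image f).sum g ≤ s.sum (fun a => g (f a)) := by
  classical
  induction s using Finset.induction with
  | empty => simp
  | insert _ _ ha ih =>
    rename_i a s'
    rw [Finset.image_insert, Finset.sum_insert ha]
    by_cases h : f a ∈ s'.image f
    · rw [Finset.insert_eq_self.2 h]
      exact ih.trans (Nat.le_add_left _ _)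
    · rw [Finset.sum_insert h]
      exact Nat.add_le_add_left ih _

def mu (D : Finset (Finset X)) : ℕ := D.sum Finset.card + D.card

lemma mu_restrictX_lt {D : Finset (Finset X)} {x : X} {c0 : Finset X}
    (hc0 : c0 ∈ D) (hx : x ∈ c0) : mu (restrictX D x) < mu D := by
  have h1 : (restrictX D x).sum Finset.card ≤ D.sum (fun c => (c.erase x).card) :=
    sum_image_le_nat D (·.erase x) Finset.card
  have h2 : D.sum (fun c => (c.erase x).card) < D.sum Finset.card := by
    apply Finset.sum_lt_sum
    · intro i _; exact Finset.card_le_card (Finset.erase_subset _ _)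
    · exact ⟨c0, hc0, Finset.card_erase_lt_of_mem hx⟩
  have h3 : (restrictX D x).card ≤ D.card := Finset.card_image_le
  unfold mu; omega

lemma mu_reduction_lt {D : Finset (Finset X)} {x : X} {c0 : Finset X}
    (hc0 : c0 ∈ D) (hx : x ∈ c0) : mu (reduction D x) < mu D := by
  have hss : reduction D x ⊂ D := by
    refine ⟨Finset.filter_subset _ _, fun hsub => ?_⟩
    have := hsub hc0
    simp only [reduction, Finset.mem_filter] at this
    exact this.2.1 hx
  have h1 : (reduction D x).sum Finset.card ≤ D.sum Finset.card :=
    Finset.sum_le_sum_of_subset hss.subset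
  have h2 : (reduction D x).card < D.card := Finset.card_lt_card hss
  unfold mu; omega

lemma strSets_trivial {D : Finset (Finset X)} (h : ∀ c ∈ D, c = ∅) :
    (strSets D).card ≤ D.card := by
  have hsub : strSets D ⊆ {∅} := by
    intro Y hY
    obtain ⟨t, ht, hcube⟩ := mem_strSets.1 hY
    have hmem : t ∪ Y ∈ D := hcube Y (Finset.mem_powerset_self Y)
    have : t ∪ Y = ∅ := h _ hmem
    rw [Finset.union_eq_empty] at this
    simp [this.2]
  rcases (strSets D).eq_empty_or_nonempty with he | ⟨Y, hY⟩
  · simp [he]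
  · obtain ⟨t, ht, hcube⟩ := mem_strSets.1 hY
    have hmem : t ∪ Y ∈ D := hcube Y (Finset.mem_powerset_self Y)
    calc (strSets D).card ≤ ({∅} : Finset (Finset X)).card := Finset.card_le_card hsub
      _ = 1 := Finset.card_singleton _
      _ ≤ D.card := Finset.card_pos.2 ⟨_, hmem⟩

lemma card_strSets_le : ∀ (n : ℕ) (D : Finset (Finset X)), mu D ≤ n →
    (strSets D).card ≤ D.card := by
  intro n
  induction n with
  | zero =>
    intro D hD
    have : D.card = 0 := by unfold mu at hD; omega
    rw [Finset.card_eq_zero] at this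
    subst this
    exact strSets_trivial (by simp)
  | succ n ih =>
    intro D hD
    by_cases hx : ∃ x, ∃ c ∈ D, x ∈ c
    · obtain ⟨x, c0, hc0, hxc0⟩ := hx
      have hsplit :
          ((strSets D).filter (fun Y => x ∈ Y)).card
            + ((strSets D).filter (fun Y => x ∉ Y)).card = (strSets D).card :=
        Finset.card_filter_add_card_filter_not _
      have h1 : (strSets D).filter (fun Y => x ∉ Y) ⊆ strSets (restrictX D x) := by
        intro Y hY
        rw [Finset.mem_filter] at hY
        exact strSets_restrictX hY.2 hY.1
      have h2 : ((strSets D).filter (fun Y => x ∈ Y)).image (·.erase x)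
          ⊆ strSets (reduction D x) := by
        intro Y hY
        obtain ⟨Z, hZ, rfl⟩ := Finset.mem_image.1 hY
        rw [Finset.mem_filter] at hZ
        exact strSets_reduction hZ.2 hZ.1
      have h2c : (((strSets D).filter (fun Y => x ∈ Y)).image (·.erase x)).card
          = ((strSets D).filter (fun Y => x ∈ Y)).card := by
        apply Finset.card_image_of_injOn
        intro a ha b hb hab
        simp only [Finset.coe_filter, Set.mem_setOf_eq] at ha hb
        simp only at hab
        rw [← Finset.insert_erase ha.2, ← Finset.insert_erase hb.2, hab]
      have hia : (strSets (restrictX D x)).card ≤ (restrictX D x).card :=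
        ih _ (by have := mu_restrictX_lt hc0 hxc0; omega)
      have hib : (strSets (reduction D x)).card ≤ (reduction D x).card :=
        ih _ (by have := mu_reduction_lt hc0 hxc0; omega)
      have hcards := card_restrictX_add_card_reduction D x
      have c1 : ((strSets D).filter (fun Y => x ∉ Y)).card
          ≤ (restrictX D x).card := (Finset.card_le_card h1).trans hia
      have c2 : ((strSets D).filter (fun Y => x ∈ Y)).card
          ≤ (reduction D x).card := by
        rw [← h2c]; exact (Finset.card_le_card h2).trans hib
      omega
    · push_neg at hx
      exact strSets_trivial fun c hc =>
        Finset.eq_empty_iff_forall_notMem.2 fun a ha => hx a c hc ha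

lemma empty_mem_shatteredSets {D : Finset (Finset X)} (h : D.Nonempty) :
    ∅ ∈ shatteredSets D := by
  obtain ⟨c, hc⟩ := h
  refine mem_shatteredSets'.2 fun s hs => ?_
  rw [Finset.mem_powerset, Finset.subset_empty] at hs
  subst hs
  exact ⟨c, hc, Finset.inter_empty c⟩

lemma card_le_card_shatteredSets : ∀ (n : ℕ) (D : Finset (Finset X)), mu D ≤ n →
    D.card ≤ (shatteredSets D).card := by
  intro n
  induction n with
  | zero =>
    intro D hD
    have : D.card = 0 := by unfold mu at hD; omega
    omega
  | succ n ih =>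
    intro D hD
    by_cases hx : ∃ x, ∃ c ∈ D, x ∈ c
    · obtain ⟨x, c0, hc0, hxc0⟩ := hx
      have hsplit :
          ((shatteredSets D).filter (fun Y => x ∈ Y)).card
            + ((shatteredSets D).filter (fun Y => x ∉ Y)).card = (shatteredSets D).card :=
        Finset.card_filter_add_card_filter_not _
      have h1 : (shatteredSets (restrictX D x)).card
          = ((shatteredSets D).filter (fun Y => x ∉ Y)).card := by
        rw [shatteredSets_restrictX]
      have h2 : ((shatteredSets (reduction D x)).image (insert x))
          ⊆ (shatteredSets D).filter (fun Y => x ∈ Y) := by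
        intro Y hY
        obtain ⟨Z, hZ, rfl⟩ := Finset.mem_image.1 hY
        obtain ⟨hxZ, hins⟩ := shattered_reduction_insert hZ
        exact Finset.mem_filter.2 ⟨hins, Finset.mem_insert_self _ _⟩
      have h2c : ((shatteredSets (reduction D x)).image (insert x)).card
          = (shatteredSets (reduction D x)).card := by
        apply Finset.card_image_of_injOn
        intro a ha b hb hab
        have hxa : x ∉ a := (shattered_reduction_insert (Finset.mem_coe.1 ha)).1
        have hxb : x ∉ b := (shattered_reduction_insert (Finset.mem_coe.1 hb)).1
        rw [← Finset.erase_insert hxa, ← Finset.erase_insert hxb, hab]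
      have hia : (restrictX D x).card ≤ (shatteredSets (restrictX D x)).card :=
        ih _ (by have := mu_restrictX_lt hc0 hxc0; omega)
      have hib : (reduction D x).card ≤ (shatteredSets (reduction D x)).card :=
        ih _ (by have := mu_reduction_lt hc0 hxc0; omega)
      have hcards := card_restrictX_add_card_reduction D x
      have c2 : (shatteredSets (reduction D x)).card
          ≤ ((shatteredSets D).filter (fun Y => x ∈ Y)).card := by
        rw [← h2c]; exact Finset.card_le_card h2
      omega
    · push_neg at hx
      rcases D.eq_empty_or_nonempty with he | hne
      · simp [he]
      · have hD1 : D ⊆ {∅} := fun c hc =>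
          Finset.mem_singleton.2 (Finset.eq_empty_iff_forall_notMem.2
            fun a ha => hx a c hc ha)
        calc D.card ≤ ({∅} : Finset (Finset X)).card := Finset.card_le_card hD1
          _ = 1 := Finset.card_singleton _
          _ ≤ (shatteredSets D).card := Finset.card_pos.2 ⟨∅, empty_mem_shatteredSets hne⟩


lemma ample_reduction {C : Finset (Finset X)} (x : X) (hC : IsAmple C) :
    IsAmple (reduction C x) ∧
      ∀ Y ∈ shatteredSets C, x ∈ Y → Y.erase x ∈ shatteredSets (reduction C x) := by
  classical
  have hcards := card_restrictX_add_card_reduction C x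
  have hA : (restrictX C x).card ≤ (shatteredSets (restrictX C x)).card :=
    card_le_card_shatteredSets (mu (restrictX C x)) _ le_rfl
  have hB : (reduction C x).card ≤ (shatteredSets (reduction C x)).card :=
    card_le_card_shatteredSets (mu (reduction C x)) _ le_rfl
  have h1 : (shatteredSets (restrictX C x)).card
      = ((shatteredSets C).filter (fun Y => x ∉ Y)).card := by
    rw [shatteredSets_restrictX]
  have h2 : ((shatteredSets (reduction C x)).image (insert x))
      ⊆ (shatteredSets C).filter (fun Y => x ∈ Y) := by
    intro Y hY
    obtain ⟨Z, hZ, rfl⟩ := Finset.mem_image.1 hY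
    obtain ⟨hxZ, hins⟩ := shattered_reduction_insert hZ
    exact Finset.mem_filter.2 ⟨hins, Finset.mem_insert_self _ _⟩
  have h2c : ((shatteredSets (reduction C x)).image (insert x)).card
      = (shatteredSets (reduction C x)).card := by
    apply Finset.card_image_of_injOn
    intro a ha b hb hab
    have hxa : x ∉ a := (shattered_reduction_insert (Finset.mem_coe.1 ha)).1
    have hxb : x ∉ b := (shattered_reduction_insert (Finset.mem_coe.1 hb)).1
    rw [← Finset.erase_insert hxa, ← Finset.erase_insert hxb, hab]
  have hsplit : ((shatteredSets C).filter (fun Y => x ∈ Y)).card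
      + ((shatteredSets C).filter (fun Y => x ∉ Y)).card = (shatteredSets C).card :=
    Finset.card_filter_add_card_filter_not _
  have hCc : C.card = (shatteredSets C).card := hC
  have h2le : ((shatteredSets (reduction C x)).image (insert x)).card
      ≤ ((shatteredSets C).filter (fun Y => x ∈ Y)).card := Finset.card_le_card h2
  have hample : IsAmple (reduction C x) := by unfold IsAmple; omega
  refine ⟨hample, ?_⟩
  have heq : ((shatteredSets (reduction C x)).image (insert x))
      = (shatteredSets C).filter (fun Y => x ∈ Y) := by
    apply Finset.eq_of_subset_of_card_le h2
    omega
  intro Y hY hxY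
  have : Y ∈ (shatteredSets C).filter (fun Y => x ∈ Y) := Finset.mem_filter.2 ⟨hY, hxY⟩
  rw [← heq] at this
  obtain ⟨Z, hZ, rfl⟩ := Finset.mem_image.1 this
  have hxZ : x ∉ Z := (shattered_reduction_insert hZ).1
  rw [Finset.erase_insert hxZ]
  exact hZ

lemma empty_mem_strSets {C : Finset (Finset X)} (h : ∅ ∈ shatteredSets C) :
    ∅ ∈ strSets C := by
  rw [mem_shatteredSets'] at h
  obtain ⟨c, hc, -⟩ := h ∅ (by simp)
  refine mem_strSets.2 ⟨c, Finset.inter_empty c, ?_⟩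
  intro s hs
  rw [Finset.mem_powerset, Finset.subset_empty] at hs
  subst hs
  rwa [Finset.union_empty]

lemma ample_shattered_mem_strSets {C : Finset (Finset X)} (hC : IsAmple C) :
    ∀ Y ∈ shatteredSets C, Y ∈ strSets C := by
  suffices h : ∀ (n : ℕ) (C : Finset (Finset X)), IsAmple C →
      ∀ Y ∈ shatteredSets C, Y.card ≤ n → Y ∈ strSets C by
    intro Y hY; exact h Y.card C hC Y hY le_rfl
  intro n
  induction n with
  | zero =>
    intro C hC Y hY hcard
    have : Y = ∅ := Finset.card_eq_zero.1 (Nat.le_zero.1 hcard)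
    subst this
    exact empty_mem_strSets hY
  | succ n ih =>
    intro C hC Y hY hcard
    rcases Y.eq_empty_or_nonempty with rfl | ⟨x, hx⟩
    · exact empty_mem_strSets hY
    · obtain ⟨hred_ample, hmap⟩ := ample_reduction x hC
      have hZ : Y.erase x ∈ shatteredSets (reduction C x) := hmap Y hY hx
      have hZn : (Y.erase x).card ≤ n := by
        have := Finset.card_erase_of_mem hx
        have hpos : 1 ≤ Y.card := Finset.card_pos.2 ⟨x, hx⟩
        omega
      obtain ⟨t, ht, hcube⟩ := mem_strSets.1 (ih (reduction C x) hred_ample _ hZ hZn)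
      have hxt : x ∉ t := by
        have h0 : t ∪ ∅ ∈ reduction C x := hcube ∅ (by simp)
        rw [Finset.union_empty] at h0
        exact (reduction_not_mem h0).2.1
      refine mem_strSets.2 ⟨t, ?_, ?_⟩
      · rw [Finset.eq_empty_iff_forall_notMem]
        intro a ha
        rw [Finset.mem_inter] at ha
        have hax : a ≠ x := fun he => hxt (he ▸ ha.1)
        have : a ∈ t ∩ Y.erase x :=
          Finset.mem_inter.2 ⟨ha.1, Finset.mem_erase.2 ⟨hax, ha.2⟩⟩
        rw [ht] at this
        exact Finset.notMem_empty a this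
      · intro s hs
        rw [Finset.mem_powerset] at hs
        have hs' : s.erase x ⊆ Y.erase x := Finset.erase_subset_erase x hs
        have hmem := hcube _ (Finset.mem_powerset.2 hs')
        obtain ⟨h1, h2, h3⟩ := reduction_not_mem hmem
        by_cases hxs : x ∈ s
        · have he : t ∪ s = insert x (t ∪ s.erase x) := by
            ext a
            simp only [Finset.mem_insert, Finset.mem_union, Finset.mem_erase]
            constructor
            · rintro (h | h)
              · exact Or.inr (Or.inl h)
              · rcases eq_or_ne a x with rfl | hne
                · exact Or.inl rfl
                · exact Or.inr (Or.inr ⟨hne, h⟩)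
            · rintro (rfl | h | ⟨-, h⟩)
              · exact Or.inr hxs
              · exact Or.inl h
              · exact Or.inr h
          rw [he]
          exact h3
        · rw [Finset.erase_eq_of_notMem hxs] at h1
          exact h1

/-- Every ample class admits (a) a bijection `r' : C → X(C)` satisfying
condition (C1), and (b) an injection `r'' : C → 2^X` satisfying condition (C2). -/
theorem stmt_19 (C : Finset (Finset X)) (hC : IsAmple C) :
    (∃ r' : Finset X → Finset X, (∀ c ∈ C, r' c ∈ shatteredSets C) ∧
      Set.InjOn r' ↑C ∧ (∀ Y ∈ shatteredSets C, ∃ c ∈ C, r' c = Y) ∧ CondC1 C r') ∧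
    (∃ r'' : Finset X → Finset X, Set.InjOn r'' ↑C ∧ CondC2 C r'') := by
  constructor
  · classical
    have hstr : ∀ Y ∈ shatteredSets C, Y ∈ strSets C := ample_shattered_mem_strSets hC
    set t : {Y // Y ∈ shatteredSets C} → Finset (Finset X) :=
      fun Y => C.filter (fun c => cubeAt c Y.1 ⊆ C) with ht
    have hall : ∀ s : Finset {Y // Y ∈ shatteredSets C}, s.card ≤ (s.biUnion t).card := by
      intro s
      have key : ∀ Y ∈ s.image Subtype.val, Y ∈ strSets (s.biUnion t) := by
        intro Y hY
        obtain ⟨Ys, hYs, rfl⟩ := Finset.mem_image.1 hY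
        obtain ⟨t0, ht0, hcube⟩ := mem_strSets.1 (hstr Ys.1 Ys.2)
        refine mem_strSets.2 ⟨t0, ht0, ?_⟩
        intro s2 hs2
        refine Finset.mem_biUnion.2 ⟨Ys, hYs, ?_⟩
        refine Finset.mem_filter.2 ⟨hcube s2 hs2, ?_⟩
        have hdiff : (t0 ∪ s2) \ Ys.1 = t0 := by
          ext a
          rw [Finset.mem_sdiff, Finset.mem_union]
          constructor
          · rintro ⟨h1 | h1, h2⟩
            · exact h1
            · exact absurd (Finset.mem_powerset.1 hs2 h1) h2
          · intro h1
            refine ⟨Or.inl h1, fun h2 => ?_⟩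
            have : a ∈ t0 ∩ Ys.1 := Finset.mem_inter.2 ⟨h1, h2⟩
            rw [ht0] at this
            exact Finset.notMem_empty a this
        intro e he
        simp only [cubeAt, Finset.mem_image] at he
        obtain ⟨s3, hs3, rfl⟩ := he
        rw [hdiff]
        exact hcube s3 hs3
      calc s.card = (s.image Subtype.val).card :=
            (Finset.card_image_of_injective s Subtype.val_injective).symm
        _ ≤ (strSets (s.biUnion t)).card := Finset.card_le_card key
        _ ≤ (s.biUnion t).card := card_strSets_le (mu (s.biUnion t)) _ le_rfl
    obtain ⟨f, hfinj, hft⟩ := (Finset.all_card_le_biUnion_card_iff_exists_injective t).1 hall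
    have hfC : ∀ Y, f Y ∈ C := fun Y => (Finset.mem_filter.1 (hft Y)).1
    have hfcube : ∀ Y, cubeAt (f Y) Y.1 ⊆ C := fun Y => (Finset.mem_filter.1 (hft Y)).2
    have himg : (Finset.univ.image f) = C := by
      apply Finset.eq_of_subset_of_card_le
      · intro c hc
        obtain ⟨Y, -, rfl⟩ := Finset.mem_image.1 hc
        exact hfC Y
      · rw [Finset.card_image_of_injective _ hfinj, Finset.card_univ, Fintype.card_coe]
        exact le_of_eq hC
    set r' : Finset X → Finset X := fun c =>
      if h : ∃ Y : {Y // Y ∈ shatteredSets C}, f Y = c then (h.choose).1 else ∅ with hr'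
    have hspec : ∀ c ∈ C, ∃ Y : {Y // Y ∈ shatteredSets C}, f Y = c ∧ r' c = Y.1 := by
      intro c hc
      have hex : ∃ Y : {Y // Y ∈ shatteredSets C}, f Y = c := by
        rw [← himg] at hc
        obtain ⟨Y, -, hY⟩ := Finset.mem_image.1 hc
        exact ⟨Y, hY⟩
      refine ⟨hex.choose, hex.choose_spec, ?_⟩
      rw [hr']
      exact dif_pos hex
    refine ⟨r', ?_, ?_, ?_, ?_⟩
    · intro c hc
      obtain ⟨Y, hfY, hrY⟩ := hspec c hc
      rw [hrY]
      exact Y.2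
    · intro c hc c' hc' h
      obtain ⟨Y, hfY, hrY⟩ := hspec c (Finset.mem_coe.1 hc)
      obtain ⟨Y', hfY', hrY'⟩ := hspec c' (Finset.mem_coe.1 hc')
      rw [hrY, hrY'] at h
      rw [← hfY, ← hfY', Subtype.ext h]
    · intro Y hY
      refine ⟨f ⟨Y, hY⟩, hfC _, ?_⟩
      obtain ⟨Z, hfZ, hrZ⟩ := hspec _ (hfC ⟨Y, hY⟩)
      have : Z = ⟨Y, hY⟩ := hfinj hfZ
      rw [hrZ, this]
    · intro c hc
      obtain ⟨Y, hfY, hrY⟩ := hspec c hc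
      rw [hrY, ← hfY]
      exact hfcube Y
  · refine ⟨fun c => Finset.univ \ c, ?_, ?_⟩
    · intro c _ c' _ h
      simp only at h
      have := congrArg (fun s => Finset.univ \ s) h
      simpa [Finset.sdiff_sdiff_self_left] using this
    · intro B Y hBC hcube
      obtain ⟨tb, htY, rfl⟩ := hcube
      refine ⟨tb ∪ Y, ⟨?_, ?_⟩, ?_⟩
      · exact Finset.mem_image_of_mem _ (Finset.mem_powerset_self Y)
      · rw [Finset.eq_empty_iff_forall_notMem]
        intro a ha
        rw [Finset.mem_inter, Finset.mem_sdiff] at ha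
        exact ha.1.2 (Finset.mem_union_right _ ha.2)
      · rintro c' ⟨hc', hdisj⟩
        obtain ⟨s, hs, rfl⟩ := Finset.mem_image.1 hc'
        rw [Finset.mem_powerset] at hs
        suffices hsY : s = Y by rw [hsY]
        apply Finset.Subset.antisymm hs
        intro a haY
        by_contra has
        have hat : a ∉ tb := by
          intro hat
          have : a ∈ tb ∩ Y := Finset.mem_inter.2 ⟨hat, haY⟩
          rw [htY] at this
          exact Finset.notMem_empty a this
        have hmem : a ∈ (Finset.univ \ (tb ∪ s)) ∩ Y := by
          refine Finset.mem_inter.2 ⟨Finset.mem_sdiff.2 ⟨Finset.mem_univ a, ?_⟩, haY⟩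
          intro h
          rcases Finset.mem_union.1 h with h | h
          exacts [hat h, has h]
        rw [hdisj] at hmem
        exact Finset.notMem_empty a hmem
end
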